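/- arXiv:2411.13300 — 4 statements merged into one kernel-verified Lean document; each statement's English description precedes it below -/
import Mathlib

section
/- For every p,q ∈ ℕ, P ∈ ℝ[x]_{≤p}, Q ∈ ℝ[x]_{≤q} and A ∈ GL(2,ℝ), one has Res^{p,q}(A^{*p}P, A^{*q}Q) = det(A)^{pq} · Res^{p,q}(P,Q) and Disc^{p}(A^{*p}P) = det(A)^{p(p−1)} · Disc^{p}(P). -/
noncomputable section

open Polynomial Finset

/-- The real projective line `ℝP¹`: the quotient of `ℝ² ∖ {0}` by proportionality. -/
abbrev RP1 : Type := Projectivization ℝ (Fin 2 → ℝ)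

/-- The quotient topology on the real projective line. -/
instance : TopologicalSpace RP1 :=
  inferInstanceAs (TopologicalSpace (Quotient (projectivizationSetoid ℝ (Fin 2 → ℝ))))

/-- Homogenization of a univariate real polynomial with respect to the degree `d`,
as a binary form (an element of `ℝ[x,y]`, homogeneous of degree `d` when `P.natDegree ≤ d`):
`H^d(P)(x,y) = ∑_{k=0}^d c_k x^k y^(d-k)`. -/
def homog (d : ℕ) (P : Polynomial ℝ) : MvPolynomial (Fin 2) ℝ :=
  ∑ k ∈ Finset.range (d + 1),
    MvPolynomial.C (P.coeff k) * MvPolynomial.X 0 ^ k * MvPolynomial.X 1 ^ (d - k)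

/-- The pull-back `ι_M^{*}` of a binary form `g` along the parametrized line
`ι_M : x ↦ M (x,1)ᵀ`, i.e. the univariate polynomial `g(m₁₁ x + m₁₂, m₂₁ x + m₂₂)`.
For `M = 1` this is the standard pull-back `ι^{*d} g = g(x, 1)`. -/
def pullM (M : Matrix (Fin 2) (Fin 2) ℝ) (g : MvPolynomial (Fin 2) ℝ) : Polynomial ℝ :=
  MvPolynomial.eval₂ Polynomial.C
    ![Polynomial.C (M 0 0) * Polynomial.X + Polynomial.C (M 0 1),
      Polynomial.C (M 1 0) * Polynomial.X + Polynomial.C (M 1 1)] g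

/-- Right composition `R_M g = g ∘ M` of a binary form with a linear map of `ℝ²`. -/
def compM (M : Matrix (Fin 2) (Fin 2) ℝ) (g : MvPolynomial (Fin 2) ℝ) : MvPolynomial (Fin 2) ℝ :=
  MvPolynomial.eval₂ MvPolynomial.C
    (fun i => ∑ j, MvPolynomial.C (M i j) * MvPolynomial.X j) g

/-- The operator `A^{*d} P = ι_A^{*d} (H^d P)`, i.e.
`A^{*d}P(x) = ∑_{k=0}^d c_k (a₁₁x+a₁₂)^k (a₂₁x+a₂₂)^{d-k}` for `P = ∑ c_k x^k`. -/
def AstarU (d : ℕ) (M : Matrix (Fin 2) (Fin 2) ℝ) (P : Polynomial ℝ) : Polynomial ℝ :=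
  pullM M (homog d P)

/-- The Sylvester matrix of `P` and `Q` with respect to the fixed degrees `p` and `q`
(padding with zero coefficients as if `deg P = p` and `deg Q = q`). -/
def sylvester {R : Type*} [CommRing R] (p q : ℕ) (P Q : Polynomial R) :
    Matrix (Fin (p + q)) (Fin (p + q)) R := fun i j =>
  if (i : ℕ) < q then
    (if (i : ℕ) ≤ (j : ℕ) ∧ (j : ℕ) ≤ (i : ℕ) + p then P.coeff (p + (i : ℕ) - (j : ℕ)) else 0)
  else
    (if (i : ℕ) - q ≤ (j : ℕ) ∧ (j : ℕ) ≤ (i : ℕ) then Q.coeff (q + ((i : ℕ) - q) - (j : ℕ)) else 0)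

/-- The resultant `Res^{p,q}(P,Q)` with respect to the fixed degrees `p` and `q`:
the determinant of the corresponding Sylvester matrix. -/
def resFixed {R : Type*} [CommRing R] (p q : ℕ) (P Q : Polynomial R) : R :=
  (sylvester p q P Q).det

/-- The discriminant `Disc^p(P)` of `P` with respect to the fixed degree `p`: the resultant
(with respect to degrees `(p-1, p-1)`) of the pull-backs of the two partial derivatives
`F_x`, `F_y` of the binary form `F = H^p(P)`; these pull-backs are `P'` and `p·P − x·P'`. -/
def discFixed {R : Type*} [CommRing R] (p : ℕ) (P : Polynomial R) : R :=
  (-1) ^ (p * (p - 1) / 2) *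
    resFixed (p - 1) (p - 1) (Polynomial.derivative P)
      (Polynomial.C (p : R) * P - Polynomial.X * Polynomial.derivative P)

/-- Evaluation `E_x` of a polynomial in `x₁,…,x_m;x_n` at `x ∈ ℝ^m` in its first `m`
variables, giving a univariate real polynomial in `x_n`. -/
def evalP {m : ℕ} (P : Polynomial (MvPolynomial (Fin m) ℝ)) (x : Fin m → ℝ) : Polynomial ℝ :=
  P.map (MvPolynomial.eval x : MvPolynomial (Fin m) ℝ →+* ℝ)

/-- The operator `A^{*d}` acting on the last variable of a polynomial in `x₁,…,x_m;x_n`: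
`A^{*d}P(x,x_n) = ∑_{k=0}^d c_k(x) (a₁₁x_n+a₁₂)^k (a₂₁x_n+a₂₂)^{d-k}`. -/
def AstarPoly {m : ℕ} (d : ℕ) (M : Matrix (Fin 2) (Fin 2) ℝ)
    (P : Polynomial (MvPolynomial (Fin m) ℝ)) : Polynomial (MvPolynomial (Fin m) ℝ) :=
  ∑ k ∈ Finset.range (d + 1),
    Polynomial.C (P.coeff k) *
      (Polynomial.C (MvPolynomial.C (M 0 0)) * Polynomial.X
        + Polynomial.C (MvPolynomial.C (M 0 1))) ^ k *
      (Polynomial.C (MvPolynomial.C (M 1 0)) * Polynomial.X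
        + Polynomial.C (MvPolynomial.C (M 1 1))) ^ (d - k)

/-- The order of a (polynomial) function at a point: the smallest `k` such that some
partial derivative of total order `k` does not vanish at the point, i.e. the smallest `k`
with `iteratedFDeriv ℝ k f v ≠ 0`; it is `⊤` if all derivatives vanish. -/
def ordAt {E : Type*} [NormedAddCommGroup E] [NormedSpace ℝ E] (f : E → ℝ) (v : E) : ℕ∞ :=
  sInf {k : ℕ∞ | ∃ n : ℕ, k = n ∧ iteratedFDeriv ℝ n f v ≠ 0}

/-- A function is order-invariant on a set if it has the same order at every point of the set. -/
def OrderInvariantOn {E : Type*} [NormedAddCommGroup E] [NormedSpace ℝ E]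
    (f : E → ℝ) (S : Set E) : Prop :=
  ∀ x ∈ S, ∀ y ∈ S, ordAt f x = ordAt f y

/-- `(v 0 : v 1)` is a projective root of the binary form `g` of multiplicity (exactly) `mult`:
in the factorization of `g`, the linear form vanishing on the line through `v` occurs with
exponent `mult`. -/
def HasProjRootOfMult (g : MvPolynomial (Fin 2) ℝ) (v : Fin 2 → ℝ) (mult : ℕ) : Prop :=
  ∃ h : MvPolynomial (Fin 2) ℝ,
    g = (MvPolynomial.C (v 1) * MvPolynomial.X 0 - MvPolynomial.C (v 0) * MvPolynomial.X 1) ^ mult * h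
      ∧ MvPolynomial.eval v h ≠ 0

/-- The projective zero set `Z_{ℝP¹}(P,S)` of `P` over `S`, with respect to the degree `d`
in the last variable: the set of `(x, (x_n : y))` with `x ∈ S` and `H^d(P)(x,(x_n,y)) = 0`. -/
def ZProj {m : ℕ} (d : ℕ) (P : Polynomial (MvPolynomial (Fin m) ℝ)) (S : Set (Fin m → ℝ)) :
    Set ((Fin m → ℝ) × RP1) :=
  {p | p.1 ∈ S ∧ ∃ (v : Fin 2 → ℝ) (hv : v ≠ 0),
    Projectivization.mk ℝ v hv = p.2 ∧ MvPolynomial.eval v (homog d (evalP P p.1)) = 0}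

/-- `θ` is a (finite) system of real root functions for `P` on `S`: continuous functions with
pairwise disjoint graphs whose union is `Z_ℝ(P,S)`, each of constant positive multiplicity. -/
def IsRealRootFunctions {m : ℕ} (P : Polynomial (MvPolynomial (Fin m) ℝ)) (S : Set (Fin m → ℝ))
    {k : ℕ} (θ : Fin k → (Fin m → ℝ) → ℝ) : Prop :=
  (∀ l, ContinuousOn (θ l) S) ∧
  (∀ x ∈ S, ∀ l l' : Fin k, l ≠ l' → θ l x ≠ θ l' x) ∧
  (∀ x ∈ S, ∀ t : ℝ, (evalP P x).eval t = 0 ↔ ∃ l, θ l x = t) ∧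
  (∀ l : Fin k, ∃ mult : ℕ, 0 < mult ∧ ∀ x ∈ S, (evalP P x).rootMultiplicity (θ l x) = mult)

/-- `P` is delineable on `S`. -/
def Delineable {m : ℕ} (P : Polynomial (MvPolynomial (Fin m) ℝ)) (S : Set (Fin m → ℝ)) : Prop :=
  ∃ (k : ℕ) (θ : Fin k → (Fin m → ℝ) → ℝ), IsRealRootFunctions P S θ

/-- `θ` is a (finite) system of projective root functions for `P` on `S` with respect to the
degree `d` in the last variable: continuous functions into `ℝP¹` with pairwise disjoint graphs
whose union is `Z_{ℝP¹}(P,S)`, each of constant positive multiplicity. -/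
def IsProjRootFunctions {m : ℕ} (d : ℕ) (P : Polynomial (MvPolynomial (Fin m) ℝ))
    (S : Set (Fin m → ℝ)) {k : ℕ} (θ : Fin k → (Fin m → ℝ) → RP1) : Prop :=
  (∀ l, ContinuousOn (θ l) S) ∧
  (∀ x ∈ S, ∀ l l' : Fin k, l ≠ l' → θ l x ≠ θ l' x) ∧
  (∀ x ∈ S, ∀ (v : Fin 2 → ℝ) (hv : v ≠ 0),
    (MvPolynomial.eval v (homog d (evalP P x)) = 0 ↔ ∃ l, θ l x = Projectivization.mk ℝ v hv)) ∧
  (∀ l : Fin k, ∃ mult : ℕ, 0 < mult ∧ ∀ x ∈ S, ∀ (v : Fin 2 → ℝ) (hv : v ≠ 0),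
    θ l x = Projectivization.mk ℝ v hv → HasProjRootOfMult (homog d (evalP P x)) v mult)

/-- `P` is projectively delineable on `S` (with respect to the degree `d` in the last variable). -/
def ProjDelineable {m : ℕ} (d : ℕ) (P : Polynomial (MvPolynomial (Fin m) ℝ))
    (S : Set (Fin m → ℝ)) : Prop :=
  ∃ (k : ℕ) (θ : Fin k → (Fin m → ℝ) → RP1), IsProjRootFunctions d P S θ

/-- `S` is an analytic submanifold of `ℝ^m`: around each of its points, in suitable
real-analytic coordinates, `S` is an open piece of a linear subspace. -/
def IsAnalyticSubmanifold {m : ℕ} (S : Set (Fin m → ℝ)) : Prop :=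
  ∀ s ∈ S, ∃ (U V : Set (Fin m → ℝ)) (φ ψ : (Fin m → ℝ) → (Fin m → ℝ))
      (L : Submodule ℝ (Fin m → ℝ)),
    IsOpen U ∧ IsOpen V ∧ s ∈ U ∧
    AnalyticOnNhd ℝ φ U ∧ AnalyticOnNhd ℝ ψ V ∧
    Set.MapsTo φ U V ∧ Set.MapsTo ψ V U ∧
    Set.EqOn (ψ ∘ φ) id U ∧ Set.EqOn (φ ∘ ψ) id V ∧
    φ '' (U ∩ S) = V ∩ (L : Set (Fin m → ℝ))

end

noncomputable section
open Polynomial Finset Matrix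

namespace RDcov

variable (A B : Matrix (Fin 2) (Fin 2) ℝ)

def lin1 : ℝ[X] := C (A 0 0) * X + C (A 0 1)
def lin2 : ℝ[X] := C (A 1 0) * X + C (A 1 1)

def ast (d : ℕ) (P : ℝ[X]) : ℝ[X] :=
  ∑ k ∈ range (d + 1), C (P.coeff k) * lin1 A ^ k * lin2 A ^ (d - k)

def Tmat (n : ℕ) : Matrix (Fin n) (Fin n) ℝ := fun k j =>
  (lin1 A ^ (n - 1 - (k : ℕ)) * lin2 A ^ (k : ℕ)).coeff (n - 1 - (j : ℕ))

lemma natDegree_lin1_le : (lin1 A).natDegree ≤ 1 := natDegree_linear_le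
lemma natDegree_lin2_le : (lin2 A).natDegree ≤ 1 := natDegree_linear_le

lemma natDegree_ast_le (d : ℕ) (P : ℝ[X]) : (ast A d P).natDegree ≤ d := by
  refine natDegree_sum_le_of_forall_le _ _ fun k hk => ?_
  simp only [mem_range, Nat.lt_succ_iff] at hk
  calc (C (P.coeff k) * lin1 A ^ k * lin2 A ^ (d - k)).natDegree
      ≤ (C (P.coeff k) * lin1 A ^ k).natDegree + (lin2 A ^ (d - k)).natDegree :=
        natDegree_mul_le
    _ ≤ ((C (P.coeff k)).natDegree + (lin1 A ^ k).natDegree) + (lin2 A ^ (d - k)).natDegree :=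
        Nat.add_le_add_right natDegree_mul_le _
    _ ≤ (0 + k * 1) + (d - k) * 1 := by
        gcongr
        · simp
        · exact natDegree_pow_le.trans (by gcongr; exact natDegree_linear_le)
        · exact natDegree_pow_le.trans (by gcongr; exact natDegree_linear_le)
    _ ≤ d := by omega

lemma eval_ast {d : ℕ} {P : ℝ[X]} (hP : P.natDegree ≤ d) (t : ℝ)
    (hv : A 1 0 * t + A 1 1 ≠ 0) :
    (ast A d P).eval t
      = (A 1 0 * t + A 1 1) ^ d * P.eval ((A 0 0 * t + A 0 1) / (A 1 0 * t + A 1 1)) := by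
  set u := A 0 0 * t + A 0 1 with hu
  set v := A 1 0 * t + A 1 1 with hvdef
  have h1 : (ast A d P).eval t = ∑ k ∈ range (d + 1), P.coeff k * u ^ k * v ^ (d - k) := by
    simp [ast, eval_finset_sum, lin1, lin2, hu, hvdef]
  have h2 : P.eval (u / v) = ∑ k ∈ range (d + 1), P.coeff k * (u / v) ^ k :=
    eval_eq_sum_range' (lt_of_le_of_lt hP (Nat.lt_succ_self d)) _
  rw [h1, h2, Finset.mul_sum]
  refine Finset.sum_congr rfl fun k hk => ?_
  simp only [mem_range, Nat.lt_succ_iff] at hk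
  rw [div_pow]
  have hvk : v ^ k ≠ 0 := pow_ne_zero _ hv
  field_simp
  rw [← pow_sub_mul_pow v hk]
  ring

lemma lin2_ne_zero (hA : A.det ≠ 0) : lin2 A ≠ 0 := by
  intro h
  have h0 : A 1 1 = 0 := by
    have := congrArg (fun f => Polynomial.coeff f 0) h
    simpa [lin2] using this
  have h1 : A 1 0 = 0 := by
    have := congrArg (fun f => Polynomial.coeff f 1) h
    simpa [lin2] using this
  rw [Matrix.det_fin_two] at hA
  simp [h0, h1] at hA

lemma eq_of_eval_eq_cofinite (f g h : ℝ[X]) (hh : h ≠ 0)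
    (H : ∀ t, h.eval t ≠ 0 → f.eval t = g.eval t) : f = g := by
  apply Polynomial.eq_of_infinite_eval_eq
  have : {x : ℝ | h.IsRoot x}ᶜ ⊆ {x | f.eval x = g.eval x} := by
    intro t ht
    exact H t ht
  exact Set.Infinite.mono this ((Polynomial.finite_setOf_isRoot hh).infinite_compl)

lemma eval_lin2 (t : ℝ) : (lin2 A).eval t = A 1 0 * t + A 1 1 := by simp [lin2]

lemma ast_mul {a b : ℕ} {F G : ℝ[X]} (hA : A.det ≠ 0)
    (hF : F.natDegree ≤ a) (hG : G.natDegree ≤ b) :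
    ast A (a + b) (F * G) = ast A a F * ast A b G := by
  refine eq_of_eval_eq_cofinite _ _ (lin2 A) (lin2_ne_zero A hA) fun t ht => ?_
  rw [eval_lin2] at ht
  have hFG : (F * G).natDegree ≤ a + b := natDegree_mul_le.trans (by omega)
  rw [eval_mul, eval_ast A hFG t ht, eval_ast A hF t ht, eval_ast A hG t ht, eval_mul]
  ring

lemma ast_monomial {d m : ℕ} (hm : m ≤ d) :
    ast A d (X ^ m) = lin1 A ^ m * lin2 A ^ (d - m) := by
  rw [ast]
  rw [Finset.sum_eq_single m]
  · simp
  · intro k hk hkm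
    simp [coeff_X_pow, hkm]
  · intro h
    exact absurd (Finset.mem_range.mpr (by omega)) h

lemma ast_comp {d : ℕ} {P : ℝ[X]} (hA : A.det ≠ 0) (hB : B.det ≠ 0)
    (hP : P.natDegree ≤ d) :
    ast (A * B) d P = ast B d (ast A d P) := by
  have hAB : (A * B).det ≠ 0 := by
    rw [Matrix.det_mul]; exact mul_ne_zero hA hB
  refine eq_of_eval_eq_cofinite _ _ (lin2 B * lin2 (A * B))
    (mul_ne_zero (lin2_ne_zero B hB) (lin2_ne_zero (A * B) hAB)) fun t ht => ?_
  rw [eval_mul, mul_ne_zero_iff, eval_lin2, eval_lin2] at ht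
  obtain ⟨htB, htAB⟩ := ht
  set uB := B 0 0 * t + B 0 1
  set vB := B 1 0 * t + B 1 1
  have hABe0 : (A * B) 0 0 * t + (A * B) 0 1 = A 0 0 * uB + A 0 1 * vB := by
    simp only [Matrix.mul_apply, Fin.sum_univ_two, uB, vB]; ring
  have hABe1 : (A * B) 1 0 * t + (A * B) 1 1 = A 1 0 * uB + A 1 1 * vB := by
    simp only [Matrix.mul_apply, Fin.sum_univ_two, uB, vB]; ring
  have hvA : A 1 0 * (uB / vB) + A 1 1 ≠ 0 := by
    intro h
    apply htAB
    rw [hABe1]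
    field_simp at h
    linarith [h]
  rw [eval_ast B (natDegree_ast_le A d P) t htB, eval_ast A hP _ hvA,
      eval_ast (A * B) hP t htAB]
  rw [hABe0, hABe1]
  set M1 := A 1 0 * uB + A 1 1 * vB with hM1def
  set M0 := A 0 0 * uB + A 0 1 * vB with hM0def
  have hM1 : M1 ≠ 0 := by rw [← hABe1]; exact htAB
  have h1 : A 1 0 * (uB / vB) + A 1 1 = M1 / vB := by
    rw [hM1def]; field_simp
  have h2 : A 0 0 * (uB / vB) + A 0 1 = M0 / vB := by
    rw [hM0def]; field_simp
  have harg : M0 / vB / (M1 / vB) = M0 / M1 := by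
    rw [div_div_div_cancel_right₀]; exact htB
  rw [h1, h2, harg, div_pow]
  field_simp
  rfl

lemma coeff_ast {n : ℕ} (j : Fin n) {F : ℝ[X]} (hF : F.natDegree ≤ n - 1) :
    (ast A (n - 1) F).coeff (n - 1 - (j : ℕ))
      = ∑ k : Fin n, F.coeff (n - 1 - (k : ℕ)) * Tmat A n k j := by
  have hpos : 0 < n := j.pos
  have hn : n - 1 + 1 = n := by omega
  have hconv : (∑ k : Fin n, F.coeff (n - 1 - (k : ℕ)) * Tmat A n k j)
      = ∑ k ∈ range n,
          F.coeff (n - 1 - k) * (lin1 A ^ (n - 1 - k) * lin2 A ^ k).coeff (n - 1 - (j : ℕ)) := by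
    rw [← Fin.sum_univ_eq_sum_range]
    rfl
  rw [hconv, ast, finset_sum_coeff, hn]
  calc ∑ m ∈ range n,
        (C (F.coeff m) * lin1 A ^ m * lin2 A ^ (n - 1 - m)).coeff (n - 1 - (j : ℕ))
      = ∑ m ∈ range n,
          F.coeff m * (lin1 A ^ m * lin2 A ^ (n - 1 - m)).coeff (n - 1 - (j : ℕ)) := by
        refine Finset.sum_congr rfl fun m hm => ?_
        rw [mul_assoc, coeff_C_mul]
    _ = ∑ k ∈ range n,
          F.coeff (n - 1 - k)
            * (lin1 A ^ (n - 1 - k) * lin2 A ^ (n - 1 - (n - 1 - k))).coeff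
              (n - 1 - (j : ℕ)) :=
        (Finset.sum_range_reflect
          (fun m => F.coeff m * (lin1 A ^ m * lin2 A ^ (n - 1 - m)).coeff
            (n - 1 - (j : ℕ))) n).symm
    _ = ∑ k ∈ range n,
          F.coeff (n - 1 - k) * (lin1 A ^ (n - 1 - k) * lin2 A ^ k).coeff
            (n - 1 - (j : ℕ)) := by
        refine Finset.sum_congr rfl fun k hk => ?_
        rw [mem_range] at hk
        have : n - 1 - (n - 1 - k) = k := by omega
        rw [this]

lemma natDegree_linear_pow_le (a b : ℝ) (m : ℕ) : ((C a * X + C b) ^ m).natDegree ≤ m :=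
  natDegree_pow_le.trans (by
    calc m * (C a * X + C b).natDegree ≤ m * 1 := by gcongr; exact natDegree_linear_le
      _ = m := mul_one m)

lemma coeff_linear_pow_self (a b : ℝ) (m : ℕ) : ((C a * X + C b) ^ m).coeff m = a ^ m := by
  induction m with
  | zero => simp
  | succ m ih =>
    rw [pow_succ, mul_add, coeff_add]
    have h1 : ((C a * X + C b) ^ m * (C a * X)).coeff (m + 1)
        = a * ((C a * X + C b) ^ m).coeff m := by
      rw [mul_comm ((C a * X + C b) ^ m) (C a * X), mul_assoc, coeff_C_mul, coeff_X_mul]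
    have h2 : ((C a * X + C b) ^ m * C b).coeff (m + 1) = 0 := by
      rw [mul_comm, coeff_C_mul,
        coeff_eq_zero_of_natDegree_lt ((natDegree_linear_pow_le a b m).trans_lt (Nat.lt_succ_self m)),
        mul_zero]
    rw [h1, h2, ih, add_zero, pow_succ]
    ring

lemma Tmat_mul {n : ℕ} (hA : A.det ≠ 0) (hB : B.det ≠ 0) :
    Tmat (A * B) n = Tmat A n * Tmat B n := by
  ext k j
  have hk := k.isLt
  have hm : (n - 1 - (k : ℕ)) ≤ n - 1 := by omega
  have e1 : ∀ (M : Matrix (Fin 2) (Fin 2) ℝ) (l : Fin n),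
      Tmat M n k l = (ast M (n - 1) (X ^ (n - 1 - (k : ℕ)))).coeff (n - 1 - (l : ℕ)) := by
    intro M l
    rw [ast_monomial M hm]
    simp only [Tmat]
    congr 3
    omega
  rw [Matrix.mul_apply, e1 (A * B) j]
  calc (ast (A * B) (n - 1) (X ^ (n - 1 - (k : ℕ)))).coeff (n - 1 - (j : ℕ))
      = (ast B (n - 1) (ast A (n - 1) (X ^ (n - 1 - (k : ℕ))))).coeff (n - 1 - (j : ℕ)) := by
        rw [ast_comp A B hA hB ((natDegree_X_pow_le _).trans hm)]
    _ = ∑ l : Fin n,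
          (ast A (n - 1) (X ^ (n - 1 - (k : ℕ)))).coeff (n - 1 - (l : ℕ)) * Tmat B n l j :=
        coeff_ast B j (natDegree_ast_le A _ _)
    _ = ∑ l, Tmat A n k l * Tmat B n l j :=
        Finset.sum_congr rfl fun l _ => by rw [e1 A l]

lemma det_Tmat_upper {n : ℕ} (h : A 1 0 = 0) :
    det (Tmat A n) = A.det ^ (∑ i ∈ range n, i) := by
  have hdet : A.det = A 0 0 * A 1 1 := by rw [Matrix.det_fin_two, h]; ring
  have hent : ∀ k j : Fin n,
      Tmat A n k j = A 1 1 ^ (k : ℕ) * (lin1 A ^ (n - 1 - (k : ℕ))).coeff (n - 1 - (j : ℕ)) := by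
    intro k j
    simp only [Tmat, lin2, h, map_zero, zero_mul, zero_add, ← C_pow]
    rw [mul_comm, coeff_C_mul]
  have htri : (Tmat A n).BlockTriangular id := by
    intro k j hkj
    simp only [id] at hkj
    rw [hent]
    rw [coeff_eq_zero_of_natDegree_lt, mul_zero]
    refine (natDegree_linear_pow_le _ _ _).trans_lt ?_
    have := k.isLt
    omega
  rw [Matrix.det_of_upperTriangular htri]
  have hdiag : ∀ k : Fin n, Tmat A n k k = A 1 1 ^ (k : ℕ) * A 0 0 ^ (n - 1 - (k : ℕ)) := by
    intro k
    rw [hent, lin1, coeff_linear_pow_self]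
  calc ∏ k : Fin n, Tmat A n k k
      = ∏ k : Fin n, A 1 1 ^ (k : ℕ) * A 0 0 ^ (n - 1 - (k : ℕ)) :=
        Finset.prod_congr rfl fun k _ => hdiag k
    _ = (∏ k : Fin n, A 1 1 ^ (k : ℕ)) * ∏ k : Fin n, A 0 0 ^ (n - 1 - (k : ℕ)) :=
        Finset.prod_mul_distrib
    _ = A 1 1 ^ (∑ i ∈ range n, i) * A 0 0 ^ (∑ i ∈ range n, (n - 1 - i)) := by
        rw [Finset.prod_pow_eq_pow_sum, Finset.prod_pow_eq_pow_sum]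
        rw [Fin.sum_univ_eq_sum_range (fun i => i) n,
          Fin.sum_univ_eq_sum_range (fun i => n - 1 - i) n]
    _ = A 1 1 ^ (∑ i ∈ range n, i) * A 0 0 ^ (∑ i ∈ range n, i) := by
        rw [Finset.sum_range_reflect (fun i => i) n]
    _ = A.det ^ (∑ i ∈ range n, i) := by rw [hdet, mul_pow, mul_comm]

lemma det_Tmat_lower {n : ℕ} (h : A 0 1 = 0) :
    det (Tmat A n) = A.det ^ (∑ i ∈ range n, i) := by
  have hdet : A.det = A 0 0 * A 1 1 := by rw [Matrix.det_fin_two, h]; ring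
  have hent : ∀ k j : Fin n,
      Tmat A n k j = A 0 0 ^ (n - 1 - (k : ℕ))
        * (if n - 1 - (k : ℕ) ≤ n - 1 - (j : ℕ)
            then (lin2 A ^ (k : ℕ)).coeff (n - 1 - (j : ℕ) - (n - 1 - (k : ℕ))) else 0) := by
    intro k j
    simp only [Tmat, lin1, h, map_zero, add_zero, mul_pow, ← C_pow, mul_assoc, coeff_C_mul]
    rw [mul_comm (X ^ (n - 1 - (k : ℕ))), coeff_mul_X_pow']
  have htri : (Tmat A n).BlockTriangular OrderDual.toDual := by
    intro k j hkj
    simp only [OrderDual.toDual_lt_toDual] at hkj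
    rw [hent]
    have hj := j.isLt
    rw [if_neg (by omega), mul_zero]
  rw [Matrix.det_of_lowerTriangular _ htri]
  have hdiag : ∀ k : Fin n, Tmat A n k k = A 0 0 ^ (n - 1 - (k : ℕ)) * A 1 1 ^ (k : ℕ) := by
    intro k
    rw [hent, if_pos le_rfl, Nat.sub_self]
    rw [← Polynomial.constantCoeff_apply, map_pow, constantCoeff_apply]
    congr 2
    simp [lin2]
  calc ∏ k : Fin n, Tmat A n k k
      = ∏ k : Fin n, A 0 0 ^ (n - 1 - (k : ℕ)) * A 1 1 ^ (k : ℕ) :=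
        Finset.prod_congr rfl fun k _ => hdiag k
    _ = (∏ k : Fin n, A 0 0 ^ (n - 1 - (k : ℕ))) * ∏ k : Fin n, A 1 1 ^ (k : ℕ) :=
        Finset.prod_mul_distrib
    _ = A 0 0 ^ (∑ i ∈ range n, (n - 1 - i)) * A 1 1 ^ (∑ i ∈ range n, i) := by
        rw [Finset.prod_pow_eq_pow_sum, Finset.prod_pow_eq_pow_sum]
        rw [Fin.sum_univ_eq_sum_range (fun i => i) n,
          Fin.sum_univ_eq_sum_range (fun i => n - 1 - i) n]
    _ = A 0 0 ^ (∑ i ∈ range n, i) * A 1 1 ^ (∑ i ∈ range n, i) := by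
        rw [Finset.sum_range_reflect (fun i => i) n]
    _ = A.det ^ (∑ i ∈ range n, i) := by rw [hdet, mul_pow]

lemma det_Tmat_aux {n : ℕ} (hA : A.det ≠ 0) (h00 : A 0 0 ≠ 0) :
    det (Tmat A n) = A.det ^ (∑ i ∈ range n, i) := by
  set L : Matrix (Fin 2) (Fin 2) ℝ := !![1, 0; A 1 0 / A 0 0, 1] with hL
  set U : Matrix (Fin 2) (Fin 2) ℝ :=
    !![A 0 0, A 0 1; 0, A 1 1 - A 1 0 / A 0 0 * A 0 1] with hU
  have hLU : A = L * U := by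
    ext i j
    fin_cases i <;> fin_cases j <;>
      simp [hL, hU, Matrix.mul_apply, Fin.sum_univ_two] <;> field_simp
  have hdetL : L.det = 1 := by simp [hL, Matrix.det_fin_two_of]
  have hdetU : U.det = A.det := by
    rw [hU, Matrix.det_fin_two_of, Matrix.det_fin_two]
    field_simp
    ring
  have hdetLne : L.det ≠ 0 := by rw [hdetL]; exact one_ne_zero
  have hdetUne : U.det ≠ 0 := by rw [hdetU]; exact hA
  rw [hLU, Tmat_mul L U hdetLne hdetUne, det_mul,
    det_Tmat_lower L (by simp [hL]), det_Tmat_upper U (by simp [hU]),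
    ← mul_pow, hdetL, hdetU, one_mul, ← hLU]

lemma det_Tmat {n : ℕ} (hA : A.det ≠ 0) :
    det (Tmat A n) = A.det ^ (∑ i ∈ range n, i) := by
  by_cases h00 : A 0 0 ≠ 0
  · exact det_Tmat_aux A hA h00
  · push_neg at h00
    set U0 : Matrix (Fin 2) (Fin 2) ℝ := !![1, 1; 0, 1] with hU0
    set A2 : Matrix (Fin 2) (Fin 2) ℝ :=
      !![A 0 0 - A 1 0, A 0 1 - A 1 1; A 1 0, A 1 1] with hA2
    have hsplit : A = U0 * A2 := by
      ext i j
      fin_cases i <;> fin_cases j <;>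
        simp [hU0, hA2, Matrix.mul_apply, Fin.sum_univ_two]
    have hdetU0 : U0.det = 1 := by simp [hU0, Matrix.det_fin_two_of]
    have hdetA2 : A2.det = A.det := by
      rw [hA2, Matrix.det_fin_two_of, Matrix.det_fin_two]
      ring
    have hdetA2ne : A2.det ≠ 0 := by rw [hdetA2]; exact hA
    have h200 : A2 0 0 ≠ 0 := by
      simp only [hA2, Matrix.cons_val', Matrix.cons_val_zero, Matrix.empty_val',
        Matrix.cons_val_fin_one, Matrix.of_apply]
      rw [Matrix.det_fin_two] at hA
      rw [h00] at hA ⊢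
      intro hcon
      apply hA
      have : A 1 0 = 0 := by linarith
      rw [this]
      ring
    rw [hsplit, Tmat_mul U0 A2 (by rw [hdetU0]; exact one_ne_zero) hdetA2ne, det_mul,
      det_Tmat_upper U0 (by simp [hU0]), det_Tmat_aux A2 hdetA2ne h200,
      hdetU0, hdetA2, one_pow, one_mul, ← hsplit]

lemma coeff_mul_expand {m : ℕ} (G R : ℝ[X]) {q : ℕ} (hG : G.natDegree < q) :
    (G * R).coeff m = ∑ a ∈ range q, G.coeff a * (X ^ a * R).coeff m := by
  conv_lhs => rw [Polynomial.as_sum_range' G q hG]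
  rw [Finset.sum_mul, finset_sum_coeff]
  refine Finset.sum_congr rfl fun a _ => ?_
  rw [← Polynomial.C_mul_X_pow_eq_monomial, mul_assoc, coeff_C_mul]

lemma sylvester_entry {p q : ℕ} {P Q : ℝ[X]} (hP : P.natDegree ≤ p) (hQ : Q.natDegree ≤ q)
    (i j : Fin (p + q)) :
    sylvester p q P Q i j
      = (if (i : ℕ) < q then X ^ (q - 1 - (i : ℕ)) * P else X ^ (p + q - 1 - (i : ℕ)) * Q).coeff
          (p + q - 1 - (j : ℕ)) := by
  have hi := i.isLt
  have hj := j.isLt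
  simp only [_root_.sylvester]
  by_cases hiq : (i : ℕ) < q
  · rw [if_pos hiq, if_pos hiq, mul_comm, coeff_mul_X_pow']
    by_cases hcond : (i : ℕ) ≤ (j : ℕ) ∧ (j : ℕ) ≤ (i : ℕ) + p
    · rw [if_pos hcond, if_pos (by omega)]
      congr 1
      omega
    · rw [if_neg hcond]
      by_cases hc2 : q - 1 - (i : ℕ) ≤ p + q - 1 - (j : ℕ)
      · rw [if_pos hc2]
        exact (coeff_eq_zero_of_natDegree_lt (by omega)).symm
      · rw [if_neg hc2]
  · rw [if_neg hiq, if_neg hiq, mul_comm, coeff_mul_X_pow']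
    by_cases hcond : (i : ℕ) - q ≤ (j : ℕ) ∧ (j : ℕ) ≤ (i : ℕ)
    · rw [if_pos hcond, if_pos (by omega)]
      congr 1
      omega
    · rw [if_neg hcond]
      by_cases hc2 : p + q - 1 - (i : ℕ) ≤ p + q - 1 - (j : ℕ)
      · rw [if_pos hc2]
        exact (coeff_eq_zero_of_natDegree_lt (by omega)).symm
      · rw [if_neg hc2]

def sumEquiv (p q : ℕ) : Fin q ⊕ Fin p ≃ Fin (p + q) :=
  finSumFinEquiv.trans (finCongr (Nat.add_comm q p))

lemma sumEquiv_inl_val {p q : ℕ} (a : Fin q) : ((sumEquiv p q) (Sum.inl a) : ℕ) = (a : ℕ) := by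
  simp [sumEquiv]

lemma sumEquiv_inr_val {p q : ℕ} (b : Fin p) : ((sumEquiv p q) (Sum.inr b) : ℕ) = q + (b : ℕ) := by
  simp [sumEquiv]
  omega

def Bmat (p q : ℕ) : Matrix (Fin (p + q)) (Fin (p + q)) ℝ :=
  Matrix.reindex (sumEquiv p q) (sumEquiv p q)
    (Matrix.fromBlocks (Tmat A q) 0 0 (Tmat A p))

lemma transport {p q : ℕ} {P Q : ℝ[X]} (hA : A.det ≠ 0)
    (hP : P.natDegree ≤ p) (hQ : Q.natDegree ≤ q) :
    Bmat A p q * sylvester p q (ast A p P) (ast A q Q)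
      = sylvester p q P Q * Tmat A (p + q) := by
  set e := sumEquiv p q with he
  ext i j
  obtain ⟨s, rfl⟩ : ∃ s, e s = i := ⟨e.symm i, Equiv.apply_symm_apply _ _⟩
  rw [Matrix.mul_apply, Matrix.mul_apply]
  have hj := j.isLt
  have hBe : ∀ s s', Bmat A p q (e s) (e s')
      = Matrix.fromBlocks (Tmat A q) 0 0 (Tmat A p) s s' := by
    intro s s'
    simp [Bmat, he, Matrix.reindex_apply, Matrix.submatrix_apply]
  have hsum : (∑ i', Bmat A p q (e s) i' * sylvester p q (ast A p P) (ast A q Q) i' j)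
      = ∑ s', Bmat A p q (e s) (e s') * sylvester p q (ast A p P) (ast A q Q) (e s') j :=
    (Equiv.sum_comp e (fun i' => Bmat A p q (e s) i'
      * sylvester p q (ast A p P) (ast A q Q) i' j)).symm
  rw [hsum]
  have hSent := sylvester_entry (natDegree_ast_le A p P) (natDegree_ast_le A q Q)
  have hSent' := sylvester_entry hP hQ
  cases s with
  | inl ti =>
    have hti := ti.isLt
    have hrowval : ((e (Sum.inl ti)) : ℕ) = (ti : ℕ) := sumEquiv_inl_val ti
    -- LHS
    rw [Fintype.sum_sum_type]
    have hz : (∑ b : Fin p, Bmat A p q (e (Sum.inl ti)) (e (Sum.inr b))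
        * sylvester p q (ast A p P) (ast A q Q) (e (Sum.inr b)) j) = 0 := by
      refine Finset.sum_eq_zero fun b _ => ?_
      rw [hBe]
      simp [Matrix.fromBlocks]
    rw [hz, add_zero]
    have hstep : ∀ a : Fin q,
        Bmat A p q (e (Sum.inl ti)) (e (Sum.inl a))
            * sylvester p q (ast A p P) (ast A q Q) (e (Sum.inl a)) j
          = (lin1 A ^ (q - 1 - (ti : ℕ)) * lin2 A ^ (ti : ℕ)).coeff (q - 1 - (a : ℕ))
            * (X ^ (q - 1 - (a : ℕ)) * ast A p P).coeff (p + q - 1 - (j : ℕ)) := by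
      intro a
      rw [hBe, hSent]
      rw [if_pos (by rw [sumEquiv_inl_val]; exact a.isLt), sumEquiv_inl_val]
      rfl
    rw [Finset.sum_congr rfl fun a _ => hstep a]
    -- now identify with (G * astP).coeff
    set G : ℝ[X] := lin1 A ^ (q - 1 - (ti : ℕ)) * lin2 A ^ (ti : ℕ) with hG
    have hGdeg : G.natDegree < q := by
      rw [hG]
      refine lt_of_le_of_lt natDegree_mul_le ?_
      have h1 := natDegree_linear_pow_le (A 0 0) (A 0 1) (q - 1 - (ti : ℕ))
      have h2 := natDegree_linear_pow_le (A 1 0) (A 1 1) (ti : ℕ)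
      rw [lin1] at *
      rw [lin2] at *
      omega
    have hcollect : (∑ a : Fin q, G.coeff (q - 1 - (a : ℕ))
          * (X ^ (q - 1 - (a : ℕ)) * ast A p P).coeff (p + q - 1 - (j : ℕ)))
        = (G * ast A p P).coeff (p + q - 1 - (j : ℕ)) := by
      calc (∑ a : Fin q, G.coeff (q - 1 - (a : ℕ))
            * (X ^ (q - 1 - (a : ℕ)) * ast A p P).coeff (p + q - 1 - (j : ℕ)))
          = ∑ a ∈ range q, G.coeff (q - 1 - a)
              * (X ^ (q - 1 - a) * ast A p P).coeff (p + q - 1 - (j : ℕ)) :=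
            Fin.sum_univ_eq_sum_range (fun a => G.coeff (q - 1 - a)
              * (X ^ (q - 1 - a) * ast A p P).coeff (p + q - 1 - (j : ℕ))) q
        _ = ∑ a ∈ range q, G.coeff a * (X ^ a * ast A p P).coeff (p + q - 1 - (j : ℕ)) :=
            Finset.sum_range_reflect
              (fun a => G.coeff a * (X ^ a * ast A p P).coeff (p + q - 1 - (j : ℕ))) q
        _ = (G * ast A p P).coeff (p + q - 1 - (j : ℕ)) := (coeff_mul_expand _ _ hGdeg).symm
    rw [hcollect]
    have hGast : G = ast A (q - 1) (X ^ (q - 1 - (ti : ℕ))) := by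
      rw [ast_monomial A (by omega), hG]
      congr 2
      omega
    have hmul : G * ast A p P = ast A (p + q - 1) (X ^ (q - 1 - (ti : ℕ)) * P) := by
      rw [hGast, ← ast_mul A hA ((natDegree_X_pow_le _).trans (by omega)) hP]
      congr 1
      omega
    rw [hmul]
    have hFdeg : (X ^ (q - 1 - (ti : ℕ)) * P).natDegree ≤ p + q - 1 :=
      natDegree_mul_le.trans (by rw [natDegree_X_pow]; omega)
    rw [coeff_ast A j hFdeg]
    refine Finset.sum_congr rfl fun k _ => ?_
    rw [hSent' _ k, if_pos (by rw [hrowval]; exact hti), hrowval]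
  | inr tb =>
    have htb := tb.isLt
    have hrowval : ((e (Sum.inr tb)) : ℕ) = q + (tb : ℕ) := sumEquiv_inr_val tb
    rw [Fintype.sum_sum_type]
    have hz : (∑ a : Fin q, Bmat A p q (e (Sum.inr tb)) (e (Sum.inl a))
        * sylvester p q (ast A p P) (ast A q Q) (e (Sum.inl a)) j) = 0 := by
      refine Finset.sum_eq_zero fun a _ => ?_
      rw [hBe]
      simp [Matrix.fromBlocks]
    rw [hz, zero_add]
    have hstep : ∀ b : Fin p,
        Bmat A p q (e (Sum.inr tb)) (e (Sum.inr b))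
            * sylvester p q (ast A p P) (ast A q Q) (e (Sum.inr b)) j
          = (lin1 A ^ (p - 1 - (tb : ℕ)) * lin2 A ^ (tb : ℕ)).coeff (p - 1 - (b : ℕ))
            * (X ^ (p - 1 - (b : ℕ)) * ast A q Q).coeff (p + q - 1 - (j : ℕ)) := by
      intro b
      rw [hBe, hSent]
      rw [if_neg (by rw [sumEquiv_inr_val]; omega), sumEquiv_inr_val]
      rw [show p + q - 1 - (q + (b : ℕ)) = p - 1 - (b : ℕ) from by omega]
      rfl
    rw [Finset.sum_congr rfl fun b _ => hstep b]
    set G : ℝ[X] := lin1 A ^ (p - 1 - (tb : ℕ)) * lin2 A ^ (tb : ℕ) with hG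
    have hGdeg : G.natDegree < p := by
      rw [hG]
      refine lt_of_le_of_lt natDegree_mul_le ?_
      have h1 := natDegree_linear_pow_le (A 0 0) (A 0 1) (p - 1 - (tb : ℕ))
      have h2 := natDegree_linear_pow_le (A 1 0) (A 1 1) (tb : ℕ)
      rw [lin1] at *
      rw [lin2] at *
      omega
    have hcollect : (∑ b : Fin p, G.coeff (p - 1 - (b : ℕ))
          * (X ^ (p - 1 - (b : ℕ)) * ast A q Q).coeff (p + q - 1 - (j : ℕ)))
        = (G * ast A q Q).coeff (p + q - 1 - (j : ℕ)) := by
      calc (∑ b : Fin p, G.coeff (p - 1 - (b : ℕ))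
            * (X ^ (p - 1 - (b : ℕ)) * ast A q Q).coeff (p + q - 1 - (j : ℕ)))
          = ∑ b ∈ range p, G.coeff (p - 1 - b)
              * (X ^ (p - 1 - b) * ast A q Q).coeff (p + q - 1 - (j : ℕ)) :=
            Fin.sum_univ_eq_sum_range (fun b => G.coeff (p - 1 - b)
              * (X ^ (p - 1 - b) * ast A q Q).coeff (p + q - 1 - (j : ℕ))) p
        _ = ∑ b ∈ range p, G.coeff b * (X ^ b * ast A q Q).coeff (p + q - 1 - (j : ℕ)) :=
            Finset.sum_range_reflect
              (fun b => G.coeff b * (X ^ b * ast A q Q).coeff (p + q - 1 - (j : ℕ))) p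
        _ = (G * ast A q Q).coeff (p + q - 1 - (j : ℕ)) := (coeff_mul_expand _ _ hGdeg).symm
    rw [hcollect]
    have hGast : G = ast A (p - 1) (X ^ (p - 1 - (tb : ℕ))) := by
      rw [ast_monomial A (by omega), hG]
      congr 2
      omega
    have hmul : G * ast A q Q = ast A (p + q - 1) (X ^ (p - 1 - (tb : ℕ)) * Q) := by
      rw [hGast, ← ast_mul A hA ((natDegree_X_pow_le _).trans (by omega)) hQ]
      congr 1
      omega
    rw [hmul]
    have hFdeg : (X ^ (p - 1 - (tb : ℕ)) * Q).natDegree ≤ p + q - 1 :=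
      natDegree_mul_le.trans (by rw [natDegree_X_pow]; omega)
    rw [coeff_ast A j hFdeg]
    refine Finset.sum_congr rfl fun k _ => ?_
    rw [hSent' _ k, if_neg (by rw [hrowval]; omega), hrowval]
    rw [show p + q - 1 - (q + (tb : ℕ)) = p - 1 - (tb : ℕ) from by omega]

lemma tri_add (p q : ℕ) :
    (∑ i ∈ range (p + q), i) = p * q + (∑ i ∈ range p, i) + ∑ i ∈ range q, i := by
  induction q with
  | zero => simp
  | succ q ih =>
    rw [Nat.add_succ, Finset.sum_range_succ, Finset.sum_range_succ, ih, Nat.mul_succ]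
    omega

lemma resFixed_ast {p q : ℕ} {P Q : ℝ[X]} (hA : A.det ≠ 0)
    (hP : P.natDegree ≤ p) (hQ : Q.natDegree ≤ q) :
    resFixed p q (ast A p P) (ast A q Q) = A.det ^ (p * q) * resFixed p q P Q := by
  have h := congrArg Matrix.det (transport A hA hP hQ)
  rw [Matrix.det_mul, Matrix.det_mul] at h
  have hB : (Bmat A p q).det
      = A.det ^ (∑ i ∈ range q, i) * A.det ^ (∑ i ∈ range p, i) := by
    rw [Bmat, Matrix.det_reindex_self, Matrix.det_fromBlocks_zero₂₁,
      det_Tmat A hA, det_Tmat A hA]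
  rw [hB, det_Tmat A hA] at h
  have hne : A.det ^ (∑ i ∈ range q, i) * A.det ^ (∑ i ∈ range p, i) ≠ 0 :=
    mul_ne_zero (pow_ne_zero _ hA) (pow_ne_zero _ hA)
  apply mul_left_cancel₀ hne
  rw [resFixed, resFixed, h]
  rw [show (∑ i ∈ range (p + q), i) = p * q + (∑ i ∈ range p, i) + ∑ i ∈ range q, i
    from tri_add p q]
  rw [pow_add, pow_add]
  ring

lemma derivative_lin1 : derivative (lin1 A) = C (A 0 0) := by
  simp [lin1]

lemma derivative_lin2 : derivative (lin2 A) = C (A 1 0) := by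
  simp [lin2]

lemma coeff_X_mul_derivative (P : ℝ[X]) (k : ℕ) :
    (X * derivative P).coeff k = P.coeff k * (k : ℝ) := by
  cases k with
  | zero => simp [Polynomial.mul_coeff_zero]
  | succ n =>
    rw [Polynomial.coeff_X_mul, Polynomial.coeff_derivative]
    push_cast
    ring

lemma ast_sum_repr (x y : ℝ) (P : ℝ[X]) (m : ℕ) :
    (∑ k ∈ range (m + 2),
        C (P.coeff k) * C ((k : ℝ)) * C x * lin1 A ^ (k - 1) * lin2 A ^ (m + 1 - k))
      + (∑ k ∈ range (m + 2),
          C (P.coeff k) * C (((m + 1 - k : ℕ) : ℝ)) * C y * lin1 A ^ k * lin2 A ^ (m - k))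
    = C x * ast A m (derivative P)
      + C y * ast A m (C (((m + 1 : ℕ) : ℝ)) * P - X * derivative P) := by
  congr 1
  · rw [ast, Finset.mul_sum, Finset.sum_range_succ']
    simp only [Nat.cast_zero, map_zero, zero_mul, mul_zero, add_zero]
    refine Finset.sum_congr rfl fun k hk => ?_
    rw [Nat.succ_sub_one, Nat.succ_sub_succ, Polynomial.coeff_derivative, C_mul]
    push_cast
    ring
  · rw [ast, Finset.mul_sum, Finset.sum_range_succ]
    rw [show (C (P.coeff (m + 1)) * C (((m + 1 - (m + 1) : ℕ) : ℝ)) * C y * lin1 A ^ (m + 1)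
        * lin2 A ^ (m - (m + 1))) = 0 from by simp]
    rw [add_zero]
    refine Finset.sum_congr rfl fun k hk => ?_
    rw [mem_range] at hk
    rw [coeff_sub, coeff_C_mul, coeff_X_mul_derivative,
      show ((m + 1 - k : ℕ) : ℝ) = ((m + 1 : ℕ) : ℝ) - ((k : ℕ) : ℝ) from by
        rw [← Nat.cast_sub (by omega)]]
    simp only [C_sub, C_mul]
    ring

lemma derivative_ast (m : ℕ) (P : ℝ[X]) :
    derivative (ast A (m + 1) P)
      = C (A 0 0) * ast A m (derivative P)
        + C (A 1 0) * ast A m (C (((m + 1 : ℕ) : ℝ)) * P - X * derivative P) := by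
  rw [← ast_sum_repr, ast, derivative_sum, ← Finset.sum_add_distrib]
  refine Finset.sum_congr rfl fun k hk => ?_
  rw [mem_range, Nat.lt_succ_iff] at hk
  rw [derivative_mul, derivative_mul, derivative_C, zero_mul, zero_add,
    derivative_pow, derivative_pow, derivative_lin1, derivative_lin2,
    show m + 1 - k - 1 = m - k from by omega]
  ring

lemma euler_ast (m : ℕ) (P : ℝ[X]) :
    C (((m + 1 : ℕ) : ℝ)) * ast A (m + 1) P - X * derivative (ast A (m + 1) P)
      = C (A 0 1) * ast A m (derivative P)
        + C (A 1 1) * ast A m (C (((m + 1 : ℕ) : ℝ)) * P - X * derivative P) := by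
  rw [← ast_sum_repr (A := A) (A 0 1) (A 1 1) P m, ast, derivative_sum, Finset.mul_sum,
    Finset.mul_sum, ← Finset.sum_sub_distrib, ← Finset.sum_add_distrib]
  refine Finset.sum_congr rfl fun k hk => ?_
  rw [mem_range, Nat.lt_succ_iff] at hk
  rw [derivative_mul, derivative_mul, derivative_C, zero_mul, zero_add,
    derivative_pow, derivative_pow, derivative_lin1, derivative_lin2,
    show m + 1 - k - 1 = m - k from by omega]
  rcases Nat.eq_zero_or_pos k with hk0 | hkpos
  · subst hk0
    simp only [pow_zero, Nat.cast_zero, map_zero, zero_mul, mul_zero, mul_one, one_mul,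
      Nat.sub_zero, zero_add, add_zero]
    rw [lin2]
    ring
  · obtain ⟨k', rfl⟩ : ∃ k', k = k' + 1 := ⟨k - 1, by omega⟩
    rcases Nat.lt_or_ge k' m with hk'm | hk'm
    · obtain ⟨b, rfl⟩ : ∃ b, m = k' + b + 1 := ⟨m - k' - 1, by omega⟩
      rw [show k' + b + 1 + 1 - (k' + 1) = b + 1 from by omega,
        show k' + b + 1 - (k' + 1) = b from by omega, Nat.add_sub_cancel]
      push_cast
      simp only [map_add, _root_.map_one, map_ofNat]
      rw [lin1, lin2]
      ring
    · have hk'eq : k' = m := by omega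
      subst hk'eq
      rw [show k' + 1 - (k' + 1) = 0 from by omega,
        show k' - (k' + 1) = 0 from by omega, Nat.add_sub_cancel]
      simp only [Nat.cast_zero, map_zero, zero_mul, mul_zero, pow_zero, mul_one, add_zero]
      rw [lin1]
      push_cast
      ring

open Kronecker in
lemma res_pair {n : ℕ} (α β γ δ : ℝ) (U V : ℝ[X]) :
    resFixed n n (C α * U + C γ * V) (C β * U + C δ * V)
      = (α * δ - β * γ) ^ n * resFixed n n U V := by
  set ee : Fin 2 × Fin n ≃ Fin (n + n) :=
    finProdFinEquiv.trans (finCongr (by omega : 2 * n = n + n)) with hee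
  set M : Matrix (Fin 2) (Fin 2) ℝ := !![α, γ; β, δ] with hM
  set K : Matrix (Fin (n + n)) (Fin (n + n)) ℝ :=
    Matrix.reindex ee ee (M ⊗ₖ (1 : Matrix (Fin n) (Fin n) ℝ)) with hK
  have ee0 : ∀ a : Fin n, ((ee (0, a)) : ℕ) = (a : ℕ) := by
    intro a
    simp [hee, finProdFinEquiv]
  have ee1 : ∀ a : Fin n, ((ee (1, a)) : ℕ) = n + (a : ℕ) := by
    intro a
    simp [hee, finProdFinEquiv]
    omega
  have hKe : ∀ s s', K (ee s) (ee s') = M s.1 s'.1 * (1 : Matrix (Fin n) (Fin n) ℝ) s.2 s'.2 := by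
    intro s s'
    simp [hK, Matrix.reindex_apply, Matrix.submatrix_apply, Matrix.kroneckerMap_apply]
  have hmain : sylvester n n (C α * U + C γ * V) (C β * U + C δ * V)
      = K * sylvester n n U V := by
    ext i j
    obtain ⟨⟨r, a⟩, rfl⟩ : ∃ s, ee s = i := ⟨ee.symm i, Equiv.apply_symm_apply _ _⟩
    rw [Matrix.mul_apply]
    have hsum : (∑ i', K (ee (r, a)) i' * sylvester n n U V i' j)
        = ∑ s' : Fin 2 × Fin n, K (ee (r, a)) (ee s') * sylvester n n U V (ee s') j :=
      (Equiv.sum_comp ee (fun i' => K (ee (r, a)) i' * sylvester n n U V i' j)).symm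
    rw [hsum, Fintype.sum_prod_type]
    have hinner : ∀ r' : Fin 2,
        (∑ a' : Fin n, K (ee (r, a)) (ee (r', a')) * sylvester n n U V (ee (r', a')) j)
          = M r r' * sylvester n n U V (ee (r', a)) j := by
      intro r'
      rw [Finset.sum_eq_single a]
      · rw [hKe]
        simp
      · intro a' _ ha'
        rw [hKe]
        simp [Matrix.one_apply, ha'.symm]
      · intro h
        exact absurd (Finset.mem_univ a) h
    rw [Finset.sum_congr rfl fun r' _ => hinner r', Fin.sum_univ_two]
    have hja := j.isLt
    have han := a.isLt
    have hM00 : M 0 0 = α := by simp [hM]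
    have hM01 : M 0 1 = γ := by simp [hM]
    have hM10 : M 1 0 = β := by simp [hM]
    have hM11 : M 1 1 = δ := by simp [hM]
    fin_cases r
    · -- row in first block
      simp only [Fin.zero_eta, Fin.mk_one, Fin.isValue, _root_.sylvester, ee0, ee1, hM00, hM01]
      rw [if_pos (by omega : (a : ℕ) < n), if_pos (by omega : (a : ℕ) < n),
        if_neg (by omega : ¬ n + (a : ℕ) < n)]
      rw [show n + (a : ℕ) - n = (a : ℕ) from by omega]
      by_cases hc : (a : ℕ) ≤ (j : ℕ) ∧ (j : ℕ) ≤ (a : ℕ) + n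
      · rw [if_pos hc, if_pos hc, if_pos (by omega : (a : ℕ) ≤ (j : ℕ) ∧ (j : ℕ) ≤ n + (a : ℕ))]
        rw [coeff_add, coeff_C_mul, coeff_C_mul]
      · rw [if_neg hc, if_neg hc, if_neg (by omega : ¬((a : ℕ) ≤ (j : ℕ) ∧ (j : ℕ) ≤ n + (a : ℕ)))]
        ring
    · -- row in second block
      simp only [Fin.zero_eta, Fin.mk_one, Fin.isValue, _root_.sylvester, ee0, ee1, hM10, hM11]
      rw [if_neg (by omega : ¬ n + (a : ℕ) < n), if_pos (by omega : (a : ℕ) < n),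
        if_neg (by omega : ¬ n + (a : ℕ) < n)]
      rw [show n + (a : ℕ) - n = (a : ℕ) from by omega]
      by_cases hc : (a : ℕ) ≤ (j : ℕ) ∧ (j : ℕ) ≤ n + (a : ℕ)
      · rw [if_pos hc, if_pos hc, if_pos (by omega : (a : ℕ) ≤ (j : ℕ) ∧ (j : ℕ) ≤ (a : ℕ) + n)]
        rw [coeff_add, coeff_C_mul, coeff_C_mul]
      · rw [if_neg hc, if_neg hc, if_neg (by omega : ¬((a : ℕ) ≤ (j : ℕ) ∧ (j : ℕ) ≤ (a : ℕ) + n))]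
        ring
  rw [resFixed, resFixed, hmain, Matrix.det_mul]
  have hdetK : K.det = (α * δ - β * γ) ^ n := by
    rw [hK, Matrix.det_reindex_self, Matrix.det_kronecker, Matrix.det_one, one_pow, mul_one,
      hM, Matrix.det_fin_two_of, Fintype.card_fin]
    ring_nf
  rw [hdetK]

lemma astarU_eq (d : ℕ) (M : Matrix (Fin 2) (Fin 2) ℝ) (P : ℝ[X]) :
    AstarU d M P = ast M d P := by
  rw [AstarU, pullM, homog, ast]
  rw [MvPolynomial.eval₂_sum]
  refine Finset.sum_congr rfl fun k _ => ?_
  rw [MvPolynomial.eval₂_mul, MvPolynomial.eval₂_mul, MvPolynomial.eval₂_C,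
    MvPolynomial.eval₂_pow, MvPolynomial.eval₂_pow, MvPolynomial.eval₂_X,
    MvPolynomial.eval₂_X]
  simp [lin1, lin2]

lemma natDegree_q0_le {p : ℕ} {P : ℝ[X]} (hP : P.natDegree ≤ p) :
    (C ((p : ℕ) : ℝ) * P - X * derivative P).natDegree ≤ p - 1 := by
  rw [Polynomial.natDegree_le_iff_coeff_eq_zero]
  intro k hk
  rw [coeff_sub, coeff_C_mul, coeff_X_mul_derivative]
  by_cases hkp : k = p
  · subst hkp
    ring
  · rw [coeff_eq_zero_of_natDegree_lt (by omega : P.natDegree < k)]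
    ring

theorem final_statement (p q : ℕ) (P Q : Polynomial ℝ)
    (hP : P.natDegree ≤ p) (hQ : Q.natDegree ≤ q) (A : GL (Fin 2) ℝ) :
    resFixed p q (AstarU p (A : Matrix (Fin 2) (Fin 2) ℝ) P)
        (AstarU q (A : Matrix (Fin 2) (Fin 2) ℝ) Q)
      = ((A : Matrix (Fin 2) (Fin 2) ℝ).det) ^ (p * q) * resFixed p q P Q ∧
    discFixed p (AstarU p (A : Matrix (Fin 2) (Fin 2) ℝ) P)
      = ((A : Matrix (Fin 2) (Fin 2) ℝ).det) ^ (p * (p - 1)) * discFixed p P := by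
  set Am : Matrix (Fin 2) (Fin 2) ℝ := (A : Matrix (Fin 2) (Fin 2) ℝ) with hAm
  have hdet : Am.det ≠ 0 := by
    have hu : IsUnit Am := A.isUnit
    rw [Matrix.isUnit_iff_isUnit_det] at hu
    exact hu.ne_zero
  constructor
  · rw [astarU_eq, astarU_eq]
    exact resFixed_ast Am hdet hP hQ
  · rcases Nat.eq_zero_or_pos p with hp0 | hppos
    · subst hp0
      rw [discFixed, discFixed]
      have h00 : ∀ (F G : ℝ[X]), resFixed (0 - 1) (0 - 1) F G = 1 := by
        intro F G
        rw [resFixed]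
        exact Matrix.det_fin_zero
      rw [h00, h00]
      norm_num
    · obtain ⟨m, rfl⟩ : ∃ m, p = m + 1 := ⟨p - 1, by omega⟩
      rw [astarU_eq, discFixed, discFixed]
      have hm1 : m + 1 - 1 = m := by omega
      rw [hm1]
      rw [euler_ast Am m P, derivative_ast Am m P]
      rw [res_pair]
      have hU : (derivative P).natDegree ≤ m :=
        (Polynomial.natDegree_derivative_le P).trans (by omega)
      have hV : (C (((m + 1 : ℕ)) : ℝ) * P - X * derivative P).natDegree ≤ m := by
        have := natDegree_q0_le (p := m + 1) (P := P) hP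
        omega
      have hres := resFixed_ast Am hdet hU hV
      rw [hres]
      rw [show Am 0 0 * Am 1 1 - Am 0 1 * Am 1 0 = Am.det from (Matrix.det_fin_two Am).symm]
      rw [show (m + 1) * m = m + m * m from by ring, pow_add]
      push_cast
      ring

end RDcov

end

/-- For all `p, q ∈ ℕ`, `P ∈ ℝ[x]_{≤p}`, `Q ∈ ℝ[x]_{≤q}` and `A ∈ GL(2,ℝ)`:
`Res^{p,q}(A^{*p}P, A^{*q}Q) = det(A)^{pq} · Res^{p,q}(P,Q)` and
`Disc^{p}(A^{*p}P) = det(A)^{p(p−1)} · Disc^{p}(P)`. -/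
theorem resultant_discriminant_covariance (p q : ℕ) (P Q : Polynomial ℝ)
    (hP : P.natDegree ≤ p) (hQ : Q.natDegree ≤ q) (A : GL (Fin 2) ℝ) :
    resFixed p q (AstarU p (A : Matrix (Fin 2) (Fin 2) ℝ) P)
        (AstarU q (A : Matrix (Fin 2) (Fin 2) ℝ) Q)
      = ((A : Matrix (Fin 2) (Fin 2) ℝ).det) ^ (p * q) * resFixed p q P Q ∧
    discFixed p (AstarU p (A : Matrix (Fin 2) (Fin 2) ℝ) P)
      = ((A : Matrix (Fin 2) (Fin 2) ℝ).det) ^ (p * (p - 1)) * discFixed p P :=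
  RDcov.final_statement p q P Q hP hQ A
end

section
/- Let P ∈ ℝ[x₁,…,x_{n−1};x_n] have degree at most d in x_n and let H^d(P) denote its homogenization in the last variable with respect to degree d. Then for every x ∈ ℝ^{n−1} and x_n ∈ ℝ, the order of P at (x,x_n) equals the order of H^d(P) at (x,(x_n,1)): ord(P,(x,x_n)) = ord(H^d(P),(x,(x_n,1))). -/
section AuxOrderHomog

open scoped ContDiff Topology
open Polynomial Finset

namespace OrderHomogAux

set_option maxHeartbeats 1000000

section Master

variable {E F : Type} [NormedAddCommGroup E] [NormedSpace ℝ E]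
  [NormedAddCommGroup F] [NormedSpace ℝ F]

lemma iteratedFDeriv_congr_nhds {G : Type*} [NormedAddCommGroup G] [NormedSpace ℝ G]
    {f₁ f : E → G} {x : E} (h : f₁ =ᶠ[𝓝 x] f) (n : ℕ) :
    iteratedFDeriv ℝ n f₁ x = iteratedFDeriv ℝ n f x := by
  rw [← iteratedFDerivWithin_univ, ← iteratedFDerivWithin_univ]
  exact Filter.EventuallyEq.iteratedFDerivWithin_eq
    (by simpa [nhdsWithin_univ] using h) h.self_of_nhds n

lemma infty_add_one : (∞ : WithTop ℕ∞) + 1 ≤ ∞ := by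
  norm_num

lemma ev_smooth_master {G H : Type} [NormedAddCommGroup G] [NormedSpace ℝ G]
    [NormedAddCommGroup H] [NormedSpace ℝ H] {v : E}
    (Φ : E → G →L[ℝ] H) (B : E → F) (f : F → G)
    (hΦ : ∀ᶠ x in 𝓝 v, ContDiffAt ℝ ∞ Φ x)
    (hB : ∀ᶠ x in 𝓝 v, ContDiffAt ℝ ∞ B x)
    (hf : ∀ᶠ y in 𝓝 (B v), ContDiffAt ℝ ∞ f y) :
    ∀ᶠ x in 𝓝 v, ContDiffAt ℝ ∞ (fun x => Φ x (f (B x))) x := by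
  obtain ⟨O, hOsub, hOopen, hOmem⟩ := mem_nhds_iff.1 hf
  have hBc : ContinuousAt B v := hB.self_of_nhds.continuousAt
  have h1 : ∀ᶠ x in 𝓝 v, B x ∈ O := hBc.preimage_mem_nhds (hOopen.mem_nhds hOmem)
  filter_upwards [hΦ, hB, h1] with x hx1 hx2 hx3
  have : ContDiffAt ℝ ∞ f (B x) := hOsub hx3
  exact hx1.clm_apply (this.comp x hx2)

lemma eval_zero_of_iteratedFDeriv_zero {G : Type*} [NormedAddCommGroup G] [NormedSpace ℝ G]
    {f : E → G} {y : E} (h : iteratedFDeriv ℝ 0 f y = 0) : f y = 0 := by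
  have := congrFun (congrArg DFunLike.coe h) (fun _ => 0)
  simpa [iteratedFDeriv_zero_apply] using this

lemma master {v : E} :
    ∀ (n : ℕ) {G H : Type} [NormedAddCommGroup G] [NormedSpace ℝ G]
      [NormedAddCommGroup H] [NormedSpace ℝ H]
      (Φ : E → G →L[ℝ] H) (B : E → F) (f : F → G),
      (∀ᶠ x in 𝓝 v, ContDiffAt ℝ ∞ Φ x) →
      (∀ᶠ x in 𝓝 v, ContDiffAt ℝ ∞ B x) →
      (∀ᶠ y in 𝓝 (B v), ContDiffAt ℝ ∞ f y) →
      (∀ k ≤ n, iteratedFDeriv ℝ k f (B v) = 0) →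
      ∀ k ≤ n, iteratedFDeriv ℝ k (fun x => Φ x (f (B x))) v = 0 := by
  intro n
  induction n with
  | zero =>
    intro G H _ _ _ _ Φ B f hΦ hB hf hvan k hk
    interval_cases k
    have h0 : f (B v) = 0 := eval_zero_of_iteratedFDeriv_zero (hvan 0 le_rfl)
    ext m
    simp [iteratedFDeriv_zero_apply, h0]
  | succ n ih =>
    intro G H _ _ _ _ Φ B f hΦ hB hf hvan k hk
    match k, hk with
    | 0, hk =>
      have h0 : f (B v) = 0 := eval_zero_of_iteratedFDeriv_zero (hvan 0 (Nat.zero_le _))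
      ext m
      simp [iteratedFDeriv_zero_apply, h0]
    | (j+1), hk =>
      have hjn : j ≤ n := Nat.succ_le_succ_iff.mp hk
      set Φ₁ : E → (F →L[ℝ] G) →L[ℝ] (E →L[ℝ] H) := fun x =>
        ((ContinuousLinearMap.compL ℝ E G H) (Φ x)).comp
          ((ContinuousLinearMap.compL ℝ E F G).flip (fderiv ℝ B x)) with hΦ₁def
      set Φ₂ : E → G →L[ℝ] (E →L[ℝ] H) := fun x => (fderiv ℝ Φ x).flip with hΦ₂def
      set f₁ : F → F →L[ℝ] G := fderiv ℝ f with hf₁def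
      have hΦ' : ∀ᶠ x in 𝓝 v, ContDiffAt ℝ ∞ (fderiv ℝ Φ) x :=
        hΦ.mono fun x hx => hx.fderiv_right infty_add_one
      have hB' : ∀ᶠ x in 𝓝 v, ContDiffAt ℝ ∞ (fderiv ℝ B) x :=
        hB.mono fun x hx => hx.fderiv_right infty_add_one
      have hf' : ∀ᶠ y in 𝓝 (B v), ContDiffAt ℝ ∞ f₁ y :=
        hf.mono fun y hy => hy.fderiv_right infty_add_one
      have hΦ₁ : ∀ᶠ x in 𝓝 v, ContDiffAt ℝ ∞ Φ₁ x := by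
        filter_upwards [hΦ, hB'] with x hx1 hx2
        letI g₁ : (G →L[ℝ] H) →L[ℝ] ((E →L[ℝ] G) →L[ℝ] (E →L[ℝ] H)) :=
          ContinuousLinearMap.compL ℝ E G H
        letI g₂ : (E →L[ℝ] F) →L[ℝ] ((F →L[ℝ] G) →L[ℝ] (E →L[ℝ] G)) :=
          (ContinuousLinearMap.compL ℝ E F G).flip
        have c1 : ContDiffAt ℝ ∞ (⇑g₁ ∘ Φ) x :=
          ContDiffAt.continuousLinearMap_comp
            (G := (E →L[ℝ] G) →L[ℝ] (E →L[ℝ] H)) g₁ hx1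
        have c2 : ContDiffAt ℝ ∞ (⇑g₂ ∘ (fderiv ℝ B)) x :=
          ContDiffAt.continuousLinearMap_comp
            (G := (F →L[ℝ] G) →L[ℝ] (E →L[ℝ] G)) g₂ hx2
        exact c1.clm_comp c2
      have hΦ₂ : ∀ᶠ x in 𝓝 v, ContDiffAt ℝ ∞ Φ₂ x := by
        filter_upwards [hΦ'] with x hx
        letI g₃ : (E →L[ℝ] G →L[ℝ] H) →L[ℝ] (G →L[ℝ] (E →L[ℝ] H)) :=
          (ContinuousLinearMap.flipₗᵢ ℝ E G H).toContinuousLinearEquiv.toContinuousLinearMap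
        exact ContDiffAt.continuousLinearMap_comp (G := G →L[ℝ] (E →L[ℝ] H)) g₃ hx
      have hvan1 : ∀ k ≤ n, iteratedFDeriv ℝ k f₁ (B v) = 0 := by
        intro k hkn
        have h := hvan (k + 1) (Nat.succ_le_succ hkn)
        rw [iteratedFDeriv_succ_eq_comp_right] at h
        simp only [Function.comp_apply] at h
        exact (LinearIsometryEquiv.map_eq_zero_iff _).mp h
      have hform : fderiv ℝ (fun x => Φ x (f (B x))) =ᶠ[𝓝 v]
          fun x => Φ₁ x (f₁ (B x)) + Φ₂ x (f (B x)) := by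
        obtain ⟨O, hOsub, hOopen, hOmem⟩ := mem_nhds_iff.1 hf
        have hBc : ContinuousAt B v := hB.self_of_nhds.continuousAt
        have h1 : ∀ᶠ x in 𝓝 v, B x ∈ O := hBc.preimage_mem_nhds (hOopen.mem_nhds hOmem)
        filter_upwards [hΦ, hB, h1] with x hx1 hx2 hx3
        have hfx : ContDiffAt ℝ ∞ f (B x) := hOsub hx3
        have hdf : DifferentiableAt ℝ f (B x) := hfx.differentiableAt (by norm_num)
        have hdB : DifferentiableAt ℝ B x := hx2.differentiableAt (by norm_num)
        have hdΦ : DifferentiableAt ℝ Φ x := hx1.differentiableAt (by norm_num)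
        have hdfB : DifferentiableAt ℝ (fun x => f (B x)) x := hdf.comp x hdB
        rw [fderiv_clm_apply hdΦ hdfB]
        have hcomp : fderiv ℝ (fun x => f (B x)) x = (fderiv ℝ f (B x)).comp (fderiv ℝ B x) :=
          fderiv_comp x hdf hdB
        rw [hcomp]
        ext y
        simp [hΦ₁def, hΦ₂def, f₁]
      rw [iteratedFDeriv_succ_eq_comp_right]
      simp only [Function.comp_apply]
      rw [(LinearIsometryEquiv.map_eq_zero_iff _)]
      rw [iteratedFDeriv_congr_nhds hform j]
      have hA1 : ∀ᶠ x in 𝓝 v, ContDiffAt ℝ ∞ (fun x => Φ₁ x (f₁ (B x))) x :=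
        ev_smooth_master Φ₁ B f₁ hΦ₁ hB hf'
      have hA2 : ∀ᶠ x in 𝓝 v, ContDiffAt ℝ ∞ (fun x => Φ₂ x (f (B x))) x :=
        ev_smooth_master Φ₂ B f hΦ₂ hB hf
      obtain ⟨U, hUsub, hUopen, hUmem⟩ := mem_nhds_iff.1 (hA1.and hA2)
      have hU1 : ContDiffOn ℝ (∞ : WithTop ℕ∞) (fun x => Φ₁ x (f₁ (B x))) U := by
        intro y hy; exact ((hUsub hy).1).contDiffWithinAt
      have hU2 : ContDiffOn ℝ (∞ : WithTop ℕ∞) (fun x => Φ₂ x (f (B x))) U := by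
        intro y hy; exact ((hUsub hy).2).contDiffWithinAt
      have e1 : iteratedFDeriv ℝ j (fun x => Φ₁ x (f₁ (B x)) + Φ₂ x (f (B x))) v
          = iteratedFDeriv ℝ j (fun x => Φ₁ x (f₁ (B x))) v
            + iteratedFDeriv ℝ j (fun x => Φ₂ x (f (B x))) v := by
        rw [← iteratedFDerivWithin_of_isOpen j hUopen hUmem,
          ← iteratedFDerivWithin_of_isOpen j hUopen hUmem,
          ← iteratedFDerivWithin_of_isOpen j hUopen hUmem]
        exact iteratedFDerivWithin_add_apply'
          ((hU1 v hUmem).of_le (by exact_mod_cast (le_top : (j : ℕ∞) ≤ ⊤)))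
          ((hU2 v hUmem).of_le (by exact_mod_cast (le_top : (j : ℕ∞) ≤ ⊤))) hUopen.uniqueDiffOn hUmem
      rw [e1, ih Φ₁ B f₁ hΦ₁ hB hf' hvan1 j hjn,
        ih Φ₂ B f hΦ₂ hB hf (fun k hkn => hvan k (Nat.le_succ_of_le hkn)) j hjn, add_zero]

end Master

section OrdAt

lemma ordAt_le_of_imp {E E' : Type*} [NormedAddCommGroup E] [NormedSpace ℝ E]
    [NormedAddCommGroup E'] [NormedSpace ℝ E'] {f : E → ℝ} {g : E' → ℝ} {v : E} {w : E'}
    (hfg : ∀ n : ℕ, (∀ k ≤ n, iteratedFDeriv ℝ k f v = 0) →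
      (∀ k ≤ n, iteratedFDeriv ℝ k g w = 0)) :
    ordAt f v ≤ ordAt g w := by
  apply le_sInf
  rintro b ⟨n, rfl, hn⟩
  have : ¬ (∀ k ≤ n, iteratedFDeriv ℝ k f v = 0) := by
    intro hall
    exact hn (hfg n hall n le_rfl)
  push_neg at this
  obtain ⟨k, hkn, hk⟩ := this
  calc (sInf {k : ℕ∞ | ∃ n : ℕ, k = n ∧ iteratedFDeriv ℝ n f v ≠ 0}) ≤ (k : ℕ∞) :=
        sInf_le ⟨k, rfl, hk⟩
    _ ≤ (n : ℕ∞) := by exact_mod_cast hkn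

lemma ordAt_eq_of_iff {E E' : Type*} [NormedAddCommGroup E] [NormedSpace ℝ E]
    [NormedAddCommGroup E'] [NormedSpace ℝ E'] {f : E → ℝ} {g : E' → ℝ} {v : E} {w : E'}
    (h : ∀ n : ℕ, (∀ k ≤ n, iteratedFDeriv ℝ k f v = 0) ↔
      (∀ k ≤ n, iteratedFDeriv ℝ k g w = 0)) :
    ordAt f v = ordAt g w :=
  le_antisymm (ordAt_le_of_imp fun n => (h n).mp) (ordAt_le_of_imp fun n => (h n).mpr)

end OrdAt

section Poly

lemma homog_eval (d : ℕ) (q : Polynomial ℝ) (v : Fin 2 → ℝ) :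
    MvPolynomial.eval v (homog d q) =
      ∑ k ∈ Finset.range (d + 1), q.coeff k * v 0 ^ k * v 1 ^ (d - k) := by
  simp [homog]

lemma poly_eval (d : ℕ) (q : Polynomial ℝ) (hq : q.natDegree ≤ d) (t : ℝ) :
    q.eval t = ∑ k ∈ Finset.range (d + 1), q.coeff k * t ^ k :=
  Polynomial.eval_eq_sum_range' (Nat.lt_succ_of_le hq) t

lemma contDiff_mv_eval {m : ℕ} (q : MvPolynomial (Fin m) ℝ) :
    ContDiff ℝ ∞ (fun x : Fin m → ℝ => MvPolynomial.eval x q) := by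
  induction q using MvPolynomial.induction_on with
  | C a => simpa using contDiff_const (c := a)
  | add p q hp hq => simpa [map_add] using hp.add hq
  | mul_X p i hp =>
    have : ContDiff ℝ ∞ (fun x : Fin m → ℝ => x i) :=
      (ContinuousLinearMap.proj i : (Fin m → ℝ) →L[ℝ] ℝ).contDiff
    simpa [map_mul] using hp.mul this

variable {m : ℕ} (d : ℕ) (P : Polynomial (MvPolynomial (Fin m) ℝ)) (hP : P.natDegree ≤ d)

lemma evalP_coeff (x : Fin m → ℝ) (k : ℕ) :
    (evalP P x).coeff k = MvPolynomial.eval x (P.coeff k) := Polynomial.coeff_map _ _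

lemma evalP_natDegree (x : Fin m → ℝ) : (evalP P x).natDegree ≤ P.natDegree :=
  Polynomial.natDegree_map_le

include hP in
lemma Ffun_eq : (fun p : (Fin m → ℝ) × ℝ => Polynomial.eval p.2 (evalP P p.1)) =
    fun p => ∑ k ∈ Finset.range (d + 1),
      MvPolynomial.eval p.1 (P.coeff k) * p.2 ^ k := by
  funext p
  rw [poly_eval d _ ((evalP_natDegree P p.1).trans hP)]
  simp [evalP_coeff]

lemma Gfun_eq : (fun p : (Fin m → ℝ) × (Fin 2 → ℝ) =>
      MvPolynomial.eval p.2 (homog d (evalP P p.1))) =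
    fun p => ∑ k ∈ Finset.range (d + 1),
      MvPolynomial.eval p.1 (P.coeff k) * (p.2 0) ^ k * (p.2 1) ^ (d - k) := by
  funext p
  rw [homog_eval]
  simp [evalP_coeff]

include hP in
lemma contDiff_Ffun :
    ContDiff ℝ ∞ (fun p : (Fin m → ℝ) × ℝ => Polynomial.eval p.2 (evalP P p.1)) := by
  rw [Ffun_eq d P hP]
  apply ContDiff.sum
  intro k _
  exact ((contDiff_mv_eval (P.coeff k)).comp contDiff_fst).mul (contDiff_snd.pow k)

lemma contDiff_Gfun :
    ContDiff ℝ ∞ (fun p : (Fin m → ℝ) × (Fin 2 → ℝ) =>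
      MvPolynomial.eval p.2 (homog d (evalP P p.1))) := by
  rw [Gfun_eq]
  apply ContDiff.sum
  intro k _
  have h0 : ContDiff ℝ ∞ (fun p : (Fin m → ℝ) × (Fin 2 → ℝ) => p.2 0) :=
    ((ContinuousLinearMap.proj 0 : (Fin 2 → ℝ) →L[ℝ] ℝ).contDiff).comp contDiff_snd
  have h1 : ContDiff ℝ ∞ (fun p : (Fin m → ℝ) × (Fin 2 → ℝ) => p.2 1) :=
    ((ContinuousLinearMap.proj 1 : (Fin 2 → ℝ) →L[ℝ] ℝ).contDiff).comp contDiff_snd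
  exact (((contDiff_mv_eval (P.coeff k)).comp contDiff_fst).mul (h0.pow k)).mul (h1.pow (d - k))

include hP in
lemma identity1 (p : (Fin m → ℝ) × ℝ) :
    Polynomial.eval p.2 (evalP P p.1)
      = MvPolynomial.eval (![p.2, 1]) (homog d (evalP P p.1)) := by
  rw [homog_eval, poly_eval d _ ((evalP_natDegree P p.1).trans hP)]
  simp

lemma contDiff_A : ContDiff ℝ ∞ (fun p : (Fin m → ℝ) × ℝ =>
    (p.1, ![p.2, (1 : ℝ)]) : (Fin m → ℝ) × ℝ → (Fin m → ℝ) × (Fin 2 → ℝ)) := by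
  apply contDiff_fst.prodMk
  apply contDiff_pi.2
  intro i
  fin_cases i
  · simpa using contDiff_snd
  · simpa using contDiff_const (c := (1:ℝ))

include hP in
lemma identity2 (p : (Fin m → ℝ) × (Fin 2 → ℝ)) (ht : p.2 1 ≠ 0) :
    MvPolynomial.eval p.2 (homog d (evalP P p.1))
      = (p.2 1) ^ d * Polynomial.eval (p.2 0 / p.2 1) (evalP P p.1) := by
  rw [homog_eval, poly_eval d _ ((evalP_natDegree P p.1).trans hP), Finset.mul_sum]
  apply Finset.sum_congr rfl
  intro k hk
  have hkd : k ≤ d := Nat.lt_succ_iff.mp (Finset.mem_range.mp hk)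
  have : (p.2 1) ^ d = (p.2 1) ^ (d - k) * (p.2 1) ^ k := by
    rw [← pow_add, Nat.sub_add_cancel hkd]
  rw [div_pow, this]
  field_simp

end Poly

end OrderHomogAux

end AuxOrderHomog

/-- Let `P` be a polynomial in `x₁,…,x_m;x_n` of degree at most `d` in `x_n`,
and let `H^d(P)` be its homogenization in the last variable with respect to degree `d`. Then
for every `x ∈ ℝ^m` and `x_n ∈ ℝ`: `ord(P,(x,x_n)) = ord(H^d(P),(x,(x_n,1)))`. -/
theorem order_homogenization (m d : ℕ) (P : Polynomial (MvPolynomial (Fin m) ℝ))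
    (hP : P.natDegree ≤ d) (x : Fin m → ℝ) (xn : ℝ) :
    ordAt (fun p : (Fin m → ℝ) × ℝ => Polynomial.eval p.2 (evalP P p.1)) (x, xn)
      = ordAt (fun p : (Fin m → ℝ) × (Fin 2 → ℝ) =>
          MvPolynomial.eval p.2 (homog d (evalP P p.1))) (x, ![xn, 1]) := by
  classical
  open scoped ContDiff Topology in
  open OrderHomogAux Filter in
  set Ffun : (Fin m → ℝ) × ℝ → ℝ :=
    fun p => Polynomial.eval p.2 (evalP P p.1) with hFdef
  set Gfun : (Fin m → ℝ) × (Fin 2 → ℝ) → ℝ :=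
    fun p => MvPolynomial.eval p.2 (homog d (evalP P p.1)) with hGdef
  have hFc : ContDiff ℝ ∞ Ffun := contDiff_Ffun d P hP
  have hGc : ContDiff ℝ ∞ Gfun := contDiff_Gfun d P
  set v : (Fin m → ℝ) × ℝ := (x, xn) with hvdef
  set w : (Fin m → ℝ) × (Fin 2 → ℝ) := (x, ![xn, 1]) with hwdef
  apply ordAt_eq_of_iff
  intro n
  constructor
  · -- F vanishing ⇒ G vanishing
    intro hvan
    set Φ : (Fin m → ℝ) × (Fin 2 → ℝ) → ℝ →L[ℝ] ℝ :=
      fun p => ((p.2 1) ^ d) • ContinuousLinearMap.id ℝ ℝ with hΦdef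
    set B : (Fin m → ℝ) × (Fin 2 → ℝ) → (Fin m → ℝ) × ℝ :=
      fun p => (p.1, p.2 0 / p.2 1) with hBdef
    have hBw : B w = v := by
      simp [hBdef, hwdef, hvdef]
    have hsnd : ContDiff ℝ ∞ (fun p : (Fin m → ℝ) × (Fin 2 → ℝ) => p.2 1) :=
      ((ContinuousLinearMap.proj 1 : (Fin 2 → ℝ) →L[ℝ] ℝ).contDiff).comp contDiff_snd
    have hfst2 : ContDiff ℝ ∞ (fun p : (Fin m → ℝ) × (Fin 2 → ℝ) => p.2 0) :=
      ((ContinuousLinearMap.proj 0 : (Fin 2 → ℝ) →L[ℝ] ℝ).contDiff).comp contDiff_snd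
    have hne : ∀ᶠ p in 𝓝 w, p.2 1 ≠ 0 := by
      have hc : ContinuousAt (fun p : (Fin m → ℝ) × (Fin 2 → ℝ) => p.2 1) w :=
        hsnd.continuous.continuousAt
      apply hc.eventually_ne
      simp [hwdef]
    have hΦ : ∀ᶠ p in 𝓝 w, ContDiffAt ℝ ∞ Φ p := by
      apply Filter.Eventually.of_forall
      intro p
      exact (((hsnd.pow d).smul contDiff_const).contDiffAt)
    have hB : ∀ᶠ p in 𝓝 w, ContDiffAt ℝ ∞ B p := by
      filter_upwards [hne] with p hp
      exact contDiffAt_fst.prodMk (hfst2.contDiffAt.div hsnd.contDiffAt hp)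
    have hf : ∀ᶠ y in 𝓝 (B w), ContDiffAt ℝ ∞ Ffun y :=
      Filter.Eventually.of_forall fun y => hFc.contDiffAt
    have hvan' : ∀ k ≤ n, iteratedFDeriv ℝ k Ffun (B w) = 0 := by
      rw [hBw]; exact hvan
    have key := master n Φ B Ffun hΦ hB hf hvan'
    have heq : Gfun =ᶠ[𝓝 w] fun p => Φ p (Ffun (B p)) := by
      filter_upwards [hne] with p hp
      rw [hGdef]
      simp only
      rw [identity2 d P hP p hp]
      simp [hΦdef, hBdef, hFdef]
    intro k hk
    rw [iteratedFDeriv_congr_nhds heq k]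
    exact key k hk
  · -- G vanishing ⇒ F vanishing
    intro hvan
    set Φ : (Fin m → ℝ) × ℝ → ℝ →L[ℝ] ℝ := fun _ => ContinuousLinearMap.id ℝ ℝ with hΦdef
    set A : (Fin m → ℝ) × ℝ → (Fin m → ℝ) × (Fin 2 → ℝ) :=
      fun p => (p.1, ![p.2, 1]) with hAdef
    have hAv : A v = w := by
      simp [hAdef, hvdef, hwdef]
    have hΦ : ∀ᶠ p in 𝓝 v, ContDiffAt ℝ ∞ Φ p :=
      Filter.Eventually.of_forall fun p => contDiffAt_const
    have hA : ∀ᶠ p in 𝓝 v, ContDiffAt ℝ ∞ A p :=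
      Filter.Eventually.of_forall fun p => (contDiff_A).contDiffAt
    have hg : ∀ᶠ y in 𝓝 (A v), ContDiffAt ℝ ∞ Gfun y :=
      Filter.Eventually.of_forall fun y => hGc.contDiffAt
    have hvan' : ∀ k ≤ n, iteratedFDeriv ℝ k Gfun (A v) = 0 := by
      rw [hAv]; exact hvan
    have key := master n Φ A Gfun hΦ hA hg hvan'
    have heq : (fun p => Φ p (Gfun (A p))) = Ffun := by
      funext p
      rw [hΦdef, hFdef]
      simp only [ContinuousLinearMap.id_apply]
      rw [hGdef]
      simp only [hAdef]
      exact (identity1 d P hP p).symm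
    intro k hk
    have := key k hk
    rwa [heq] at this
end

section
/- Let S ⊆ ℝ^{n−1} and let P ∈ ℝ[x₁,…,x_{n−1};x_n] have degree d_n in x_n, written P(x,x_n)=∑_{k=0}^{d_n} c_k(x)x_n^k. Suppose there exists k ∈ {0,…,d_n} such that for all x ∈ S one has c_{d_n−k}(x) ≠ 0 and c_{d_n−j}(x) = 0 for all j with 0 ≤ j ≤ k−1. Then P is projectively delineable on S if and only if P is delineable on S. -/
noncomputable section AuxProof
open Polynomial Finset

lemma homog_eval (d : ℕ) (Q : Polynomial ℝ) (a b : ℝ) :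
    MvPolynomial.eval ![a,b] (homog d Q) = ∑ j ∈ Finset.range (d+1), Q.coeff j * a ^ j * b ^ (d - j) := by
  simp [homog]

lemma homog_eval_one (d : ℕ) (Q : Polynomial ℝ) (hd : Q.natDegree ≤ d) (t : ℝ) :
    MvPolynomial.eval ![t,1] (homog d Q) = Q.eval t := by
  rw [homog_eval, Polynomial.eval_eq_sum_range' (Nat.lt_succ_of_le hd)]
  simp

lemma homog_eval_inf (d : ℕ) (Q : Polynomial ℝ) (c : ℝ) :
    MvPolynomial.eval ![c,0] (homog d Q) = Q.coeff d * c ^ d := by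
  rw [homog_eval, Finset.sum_eq_single d]
  · simp
  · intro j hj hne
    have : j < d := by simp at hj; omega
    simp [Nat.sub_ne_zero_of_lt this, zero_pow (Nat.sub_ne_zero_of_lt this)]
  · intro h; simp at h

lemma homog_eval_smul (d : ℕ) (Q : Polynomial ℝ) (c a b : ℝ) :
    MvPolynomial.eval ![c*a, c*b] (homog d Q) = c ^ d * MvPolynomial.eval ![a,b] (homog d Q) := by
  rw [homog_eval, homog_eval, Finset.mul_sum]
  refine Finset.sum_congr rfl fun j hj => ?_
  have hjd : j ≤ d := by simp at hj; omega
  have : c ^ j * c ^ (d - j) = c ^ d := by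
    rw [← pow_add]; congr 1; omega
  calc Q.coeff j * (c*a) ^ j * (c*b) ^ (d - j)
      = (c ^ j * c ^ (d-j)) * (Q.coeff j * a ^ j * b ^ (d-j)) := by rw [mul_pow, mul_pow]; ring
    _ = c ^ d * (Q.coeff j * a ^ j * b ^ (d - j)) := by rw [this]

lemma homog_mul {A B : Polynomial ℝ} {a b : ℕ} (ha : A.natDegree ≤ a) (hb : B.natDegree ≤ b) :
    homog (a + b) (A * B) = homog a A * homog b B := by
  classical
  set F : ℕ × ℕ → MvPolynomial (Fin 2) ℝ := fun p =>
    MvPolynomial.C (A.coeff p.1) * MvPolynomial.C (B.coeff p.2) *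
      MvPolynomial.X 0 ^ (p.1 + p.2) * MvPolynomial.X 1 ^ (a + b - (p.1 + p.2)) with hF
  have hFzero : ∀ p : ℕ × ℕ, (a < p.1 ∨ b < p.2) → F p = 0 := by
    rintro p (h | h)
    · rw [hF]; simp [Polynomial.coeff_eq_zero_of_natDegree_lt (lt_of_le_of_lt ha h)]
    · rw [hF]; simp [Polynomial.coeff_eq_zero_of_natDegree_lt (lt_of_le_of_lt hb h)]
  have key : ∀ N : ℕ, a + b < N →
      ∑ p ∈ Finset.range N ×ˢ Finset.range N, F p
        = ∑ p ∈ Finset.range (a+1) ×ˢ Finset.range (b+1), F p := by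
    intro N hN
    refine (Finset.sum_subset ?_ ?_).symm
    · intro p hp
      simp only [Finset.mem_product, Finset.mem_range] at hp ⊢
      omega
    · intro p hp hnp
      simp only [Finset.mem_product, Finset.mem_range] at hp hnp
      exact hFzero p (by omega)
  have lhs : homog (a + b) (A * B) = ∑ p ∈ Finset.range (a+1) ×ˢ Finset.range (b+1), F p := by
    have h1 : homog (a + b) (A * B)
        = ∑ k ∈ Finset.range (a + b + 1), ∑ p ∈ Finset.HasAntidiagonal.antidiagonal k, F p := by
      unfold homog
      refine Finset.sum_congr rfl fun k hk => ?_
      rw [Polynomial.coeff_mul, map_sum, Finset.sum_mul, Finset.sum_mul]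
      refine Finset.sum_congr rfl fun p hp => ?_
      rw [Finset.HasAntidiagonal.mem_antidiagonal] at hp
      rw [hF]; simp only; rw [hp, map_mul]
    rw [h1]
    have h2 : ∑ k ∈ Finset.range (a + b + 1), ∑ p ∈ Finset.HasAntidiagonal.antidiagonal k, F p
        = ∑ p ∈ (Finset.range (a + b + 1)).biUnion Finset.HasAntidiagonal.antidiagonal, F p := by
      rw [Finset.sum_biUnion]
      intro k _ k' _ hkk'
      simp only [Function.onFun]
      rw [Finset.disjoint_left]
      intro p hp hp'
      rw [Finset.HasAntidiagonal.mem_antidiagonal] at hp hp'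
      exact hkk' (hp ▸ hp')
    rw [h2]
    rw [← key (a+b+1) (by omega)]
    refine Finset.sum_subset ?_ ?_
    · intro p hp
      simp only [Finset.mem_biUnion, Finset.mem_range, Finset.HasAntidiagonal.mem_antidiagonal] at hp
      obtain ⟨q, hq, rfl⟩ := hp
      simp only [Finset.mem_product, Finset.mem_range]
      omega
    · intro p hp hnp
      simp only [Finset.mem_product, Finset.mem_range] at hp
      simp only [Finset.mem_biUnion, Finset.mem_range, Finset.HasAntidiagonal.mem_antidiagonal] at hnp
      refine hFzero p ?_
      by_contra hcon
      push_neg at hcon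
      exact hnp ⟨p.1 + p.2, by omega, rfl⟩
  have rhs : homog a A * homog b B = ∑ p ∈ Finset.range (a+1) ×ˢ Finset.range (b+1), F p := by
    unfold homog
    rw [Finset.sum_mul_sum, ← Finset.sum_product']
    refine Finset.sum_congr rfl fun p hp => ?_
    simp only [Finset.mem_product, Finset.mem_range] at hp
    rw [hF]; simp only
    have e1 : (a - p.1) + (b - p.2) = a + b - (p.1 + p.2) := by omega
    rw [← e1, pow_add]
    ring
  rw [lhs, rhs]

lemma homog_one (e : ℕ) : homog e 1 = MvPolynomial.X 1 ^ e := by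
  unfold homog
  rw [Finset.sum_eq_single 0]
  · simp
  · intro j hj hne
    simp [Polynomial.coeff_one, hne]
  · simp

lemma homog_C_mul (d : ℕ) (c : ℝ) (Q : Polynomial ℝ) :
    homog d (Polynomial.C c * Q) = MvPolynomial.C c * homog d Q := by
  unfold homog
  rw [Finset.mul_sum]
  refine Finset.sum_congr rfl fun j hj => ?_
  rw [Polynomial.coeff_C_mul, map_mul]
  ring

lemma homog_pow_linear (A : Polynomial ℝ) (hA : A.natDegree ≤ 1) (mu : ℕ) :
    homog mu (A ^ mu) = (homog 1 A) ^ mu := by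
  induction mu with
  | zero => simpa using homog_one 0
  | succ n ih =>
    have hpow : (A ^ n).natDegree ≤ n := by
      refine le_trans Polynomial.natDegree_pow_le ?_
      calc n * A.natDegree ≤ n * 1 := Nat.mul_le_mul_left n hA
        _ = n := Nat.mul_one n
    have h1 : homog (1 + n) (A * A ^ n) = homog 1 A * homog n (A ^ n) := homog_mul hA hpow
    rw [pow_succ, show n + 1 = 1 + n from Nat.add_comm n 1, mul_comm (A ^ n) A, h1, ih,
      show 1 + n = n + 1 from Nat.add_comm 1 n, pow_succ, mul_comm]

lemma homog_X_sub_C (t : ℝ) :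
    homog 1 (Polynomial.X - Polynomial.C t)
      = MvPolynomial.X 0 - MvPolynomial.C t * MvPolynomial.X 1 := by
  unfold homog
  rw [Finset.sum_range_succ, Finset.sum_range_succ]
  simp
  ring

lemma vec_cases (v : Fin 2 → ℝ) : v = ![v 0, v 1] := by
  funext i; fin_cases i <;> simp

lemma vec_ne_zero {v : Fin 2 → ℝ} (hv : v ≠ 0) : v 0 ≠ 0 ∨ v 1 ≠ 0 := by
  by_contra h
  push_neg at h
  exact hv (by funext i; fin_cases i <;> simp [h.1, h.2])

lemma lin_ne_zero {v : Fin 2 → ℝ} (hv : v ≠ 0) :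
    (MvPolynomial.C (v 1) * MvPolynomial.X 0 - MvPolynomial.C (v 0) * MvPolynomial.X 1 :
      MvPolynomial (Fin 2) ℝ) ≠ 0 := by
  intro h
  have := congrArg (MvPolynomial.eval ![v 1, -(v 0)]) h
  simp at this
  have h2 : v 1 * v 1 + v 0 * v 0 = 0 := by linarith
  rcases vec_ne_zero hv with h0 | h1
  · nlinarith [mul_self_nonneg (v 1), (mul_self_pos (a := v 0)).mpr h0]
  · nlinarith [mul_self_nonneg (v 0), (mul_self_pos (a := v 1)).mpr h1]

lemma hprm_unique {g : MvPolynomial (Fin 2) ℝ} {v : Fin 2 → ℝ} (hv : v ≠ 0) {m1 m2 : ℕ}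
    (h1 : HasProjRootOfMult g v m1) (h2 : HasProjRootOfMult g v m2) : m1 = m2 := by
  obtain ⟨p, hp, hpe⟩ := h1
  obtain ⟨q, hq, hqe⟩ := h2
  set L : MvPolynomial (Fin 2) ℝ :=
    MvPolynomial.C (v 1) * MvPolynomial.X 0 - MvPolynomial.C (v 0) * MvPolynomial.X 1 with hL
  have hLv : MvPolynomial.eval v L = 0 := by rw [hL]; simp; ring
  have hLne : L ≠ 0 := lin_ne_zero hv
  have main : ∀ (a b : ℕ) (p q : MvPolynomial (Fin 2) ℝ), g = L ^ a * p →
      MvPolynomial.eval v p ≠ 0 → g = L ^ b * q → a < b → False := by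
    intro a b p q hp hpe hq hlt
    have key : p = L ^ (b - a) * q := by
      have : L ^ a * p = L ^ a * (L ^ (b - a) * q) := by
        rw [← mul_assoc, ← pow_add, show a + (b - a) = b from by omega, ← hp, ← hq]
      exact mul_left_cancel₀ (pow_ne_zero _ hLne) this
    apply hpe
    rw [key, map_mul, map_pow, hLv, zero_pow (by omega)]
    ring
  rcases lt_trichotomy m1 m2 with h | h | h
  · exact absurd (main m1 m2 p q hp hpe hq h) not_false
  · exact h
  · exact absurd (main m2 m1 q p hq hqe hp h) not_false

lemma hprm_finite (Q : Polynomial ℝ) (hQ : Q ≠ 0) {d : ℕ} (hd : Q.natDegree ≤ d) (t c : ℝ)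
    (hc : c ≠ 0) : HasProjRootOfMult (homog d Q) ![c * t, c] (Q.rootMultiplicity t) := by
  set mu := Q.rootMultiplicity t with hmu
  set R := Q /ₘ (Polynomial.X - Polynomial.C t) ^ mu with hR
  have hfact : (Polynomial.X - Polynomial.C t) ^ mu * R = Q :=
    Polynomial.pow_mul_divByMonic_rootMultiplicity_eq Q t
  have hRe : R.eval t ≠ 0 := Polynomial.eval_divByMonic_pow_rootMultiplicity_ne_zero t hQ
  have hRne : R ≠ 0 := fun h => hRe (by rw [h]; simp)
  have hdegQ : Q.natDegree = mu + R.natDegree := by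
    rw [← hfact, Polynomial.natDegree_mul (pow_ne_zero _ (Polynomial.X_sub_C_ne_zero t)) hRne]
    simp
  have hmud : mu ≤ d := le_trans (by omega) hd
  have hdegR : R.natDegree ≤ d - mu := by omega
  have hsplit : homog d Q = (MvPolynomial.X 0 - MvPolynomial.C t * MvPolynomial.X 1) ^ mu
      * homog (d - mu) R := by
    have := homog_mul (A := (Polynomial.X - Polynomial.C t) ^ mu) (B := R)
      (a := mu) (b := d - mu) (by simp [Polynomial.natDegree_pow]) hdegR
    rw [hfact, show mu + (d - mu) = d from by omega] at this
    rw [this, homog_pow_linear _ (by simp [Polynomial.natDegree_X_sub_C]) mu, homog_X_sub_C]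
  refine ⟨MvPolynomial.C (c⁻¹ ^ mu) * homog (d - mu) R, ?_, ?_⟩
  · rw [hsplit]
    have hv0 : (![c * t, c] : Fin 2 → ℝ) 0 = c * t := rfl
    have hv1 : (![c * t, c] : Fin 2 → ℝ) 1 = c := rfl
    rw [hv0, hv1]
    have hlin : (MvPolynomial.C c * MvPolynomial.X 0 - MvPolynomial.C (c * t) * MvPolynomial.X 1 :
        MvPolynomial (Fin 2) ℝ)
        = MvPolynomial.C c * (MvPolynomial.X 0 - MvPolynomial.C t * MvPolynomial.X 1) := by
      rw [map_mul]; ring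
    rw [hlin, mul_pow]
    have hcc : (MvPolynomial.C c : MvPolynomial (Fin 2) ℝ) ^ mu * MvPolynomial.C (c⁻¹ ^ mu) = 1 := by
      rw [← map_pow, ← map_mul, ← mul_pow, mul_inv_cancel₀ hc, one_pow, map_one]
    have hrg : ((MvPolynomial.C c : MvPolynomial (Fin 2) ℝ) ^ mu
          * (MvPolynomial.X 0 - MvPolynomial.C t * MvPolynomial.X 1) ^ mu)
          * (MvPolynomial.C (c⁻¹ ^ mu) * homog (d - mu) R)
        = ((MvPolynomial.C c : MvPolynomial (Fin 2) ℝ) ^ mu * MvPolynomial.C (c⁻¹ ^ mu))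
          * ((MvPolynomial.X 0 - MvPolynomial.C t * MvPolynomial.X 1) ^ mu * homog (d - mu) R) := by
      ring
    rw [hrg, hcc, one_mul]
  · simp only [MvPolynomial.eval_mul, MvPolynomial.eval_C]
    have : MvPolynomial.eval ![c * t, c] (homog (d - mu) R)
        = c ^ (d - mu) * MvPolynomial.eval ![t, 1] (homog (d - mu) R) := by
      have := homog_eval_smul (d - mu) R c t 1
      rw [mul_one] at this
      exact this
    rw [this, homog_eval_one _ _ hdegR]
    exact mul_ne_zero (pow_ne_zero _ (inv_ne_zero hc))
      (mul_ne_zero (pow_ne_zero _ hc) hRe)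

lemma hprm_inf (Q : Polynomial ℝ) (hQ : Q ≠ 0) {d : ℕ} (hd : Q.natDegree ≤ d) (c : ℝ)
    (hc : c ≠ 0) : HasProjRootOfMult (homog d Q) ![c, 0] (d - Q.natDegree) := by
  set n := Q.natDegree with hn
  have hsplit : homog d Q = homog n Q * MvPolynomial.X 1 ^ (d - n) := by
    have := homog_mul (A := Q) (B := 1) (a := n) (b := d - n) le_rfl (by simp)
    rw [mul_one, show n + (d - n) = d from by omega, homog_one] at this
    exact this
  refine ⟨MvPolynomial.C ((-c)⁻¹ ^ (d - n)) * homog n Q, ?_, ?_⟩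
  · have hv0 : (![c, 0] : Fin 2 → ℝ) 0 = c := rfl
    have hv1 : (![c, 0] : Fin 2 → ℝ) 1 = 0 := rfl
    rw [hv0, hv1, hsplit]
    have hlin : (MvPolynomial.C (0:ℝ) * MvPolynomial.X 0 - MvPolynomial.C c * MvPolynomial.X 1 :
        MvPolynomial (Fin 2) ℝ) = MvPolynomial.C (-c) * MvPolynomial.X 1 := by
      simp
    rw [hlin, mul_pow]
    have hcc : (MvPolynomial.C (-c) : MvPolynomial (Fin 2) ℝ) ^ (d - n)
        * MvPolynomial.C ((-c)⁻¹ ^ (d - n)) = 1 := by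
      rw [← map_pow, ← map_mul, ← mul_pow, mul_inv_cancel₀ (neg_ne_zero.mpr hc), one_pow, map_one]
    have hrg : ((MvPolynomial.C (-c) : MvPolynomial (Fin 2) ℝ) ^ (d - n)
          * MvPolynomial.X 1 ^ (d - n)) * (MvPolynomial.C ((-c)⁻¹ ^ (d - n)) * homog n Q)
        = ((MvPolynomial.C (-c) : MvPolynomial (Fin 2) ℝ) ^ (d - n)
          * MvPolynomial.C ((-c)⁻¹ ^ (d - n))) * (homog n Q * MvPolynomial.X 1 ^ (d - n)) := by
      ring
    rw [hrg, hcc, one_mul]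
  · simp only [MvPolynomial.eval_mul, MvPolynomial.eval_C]
    rw [homog_eval_inf]
    refine mul_ne_zero (pow_ne_zero _ (inv_ne_zero (neg_ne_zero.mpr hc))) (mul_ne_zero ?_ (pow_ne_zero _ hc))
    rw [hn]
    exact Polynomial.leadingCoeff_ne_zero.mpr hQ


lemma normsq_ne_zero {v : Fin 2 → ℝ} (hv : v ≠ 0) : v 0 ^ 2 + v 1 ^ 2 ≠ 0 := by
  rcases vec_ne_zero hv with h | h <;> positivity

lemma vone_ne_zero (t : ℝ) : (![t, 1] : Fin 2 → ℝ) ≠ 0 := by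
  intro h
  have := congrFun h 1
  simp at this

lemma vinf_ne_zero : (![1, 0] : Fin 2 → ℝ) ≠ 0 := by
  intro h
  have := congrFun h 0
  simp at this

def pInf : RP1 := Projectivization.mk ℝ ![1, 0] vinf_ne_zero

def phiR (t : ℝ) : RP1 := Projectivization.mk ℝ ![t, 1] (vone_ne_zero t)

def Fsub (v : { w : Fin 2 → ℝ // w ≠ 0 }) : ℝ × ℝ :=
  ((v.1 0 * v.1 1) / ((v.1 0) ^ 2 + (v.1 1) ^ 2), (v.1 1) ^ 2 / ((v.1 0) ^ 2 + (v.1 1) ^ 2))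

lemma Fsub_resp : ∀ (a b : { w : Fin 2 → ℝ // w ≠ 0 }) (t : ℝ), (a : Fin 2 → ℝ) = t • (b : Fin 2 → ℝ) → Fsub a = Fsub b := by
  rintro ⟨a, ha⟩ ⟨b, hb⟩ t h
  have ht : t ≠ 0 := by
    rintro rfl
    rw [zero_smul] at h
    exact ha h
  simp only [Subtype.coe_mk] at h
  have h0 : a 0 = t * b 0 := by rw [h]; simp
  have h1 : a 1 = t * b 1 := by rw [h]; simp
  have hb2 : b 0 ^ 2 + b 1 ^ 2 ≠ 0 := normsq_ne_zero hb
  unfold Fsub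
  simp only [Subtype.coe_mk, h0, h1]
  have hden : (t * b 0) ^ 2 + (t * b 1) ^ 2 ≠ 0 := by
    have he : (t * b 0) ^ 2 + (t * b 1) ^ 2 = t ^ 2 * (b 0 ^ 2 + b 1 ^ 2) := by ring
    rw [he]
    exact mul_ne_zero (pow_ne_zero _ ht) hb2
  refine Prod.ext ?_ ?_ <;>
    · simp only
      rw [div_eq_div_iff hden hb2]
      ring

def fRP : RP1 → ℝ × ℝ := Projectivization.lift Fsub Fsub_resp

lemma fRP_mk (v : Fin 2 → ℝ) (hv : v ≠ 0) :
    fRP (Projectivization.mk ℝ v hv) = Fsub ⟨v, hv⟩ := rfl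

lemma continuous_Fsub : Continuous Fsub := by
  have hc0 : Continuous fun v : { w : Fin 2 → ℝ // w ≠ 0 } => v.1 0 :=
    (continuous_apply 0).comp continuous_subtype_val
  have hc1 : Continuous fun v : { w : Fin 2 → ℝ // w ≠ 0 } => v.1 1 :=
    (continuous_apply 1).comp continuous_subtype_val
  have hden : ∀ v : { w : Fin 2 → ℝ // w ≠ 0 }, v.1 0 ^ 2 + v.1 1 ^ 2 ≠ 0 :=
    fun v => normsq_ne_zero v.2
  unfold Fsub
  exact Continuous.prodMk
    (Continuous.div (hc0.mul hc1) ((hc0.pow 2).add (hc1.pow 2)) hden)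
    (Continuous.div (hc1.pow 2) ((hc0.pow 2).add (hc1.pow 2)) hden)

lemma continuous_fRP : Continuous fRP := by
  unfold fRP Projectivization.lift
  exact continuous_Fsub.quotient_lift _

lemma continuous_phiR : Continuous phiR := by
  have h1 : Continuous fun t : ℝ => (⟨![t, 1], vone_ne_zero t⟩ : { w : Fin 2 → ℝ // w ≠ 0 }) := by
    refine Continuous.subtype_mk ?_ _
    refine continuous_pi fun i => ?_
    fin_cases i
    · simpa using continuous_id'
    · simpa using continuous_const
  have h2 : Continuous fun v : { w : Fin 2 → ℝ // w ≠ 0 } => (Quotient.mk'' v : RP1) :=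
    continuous_quotient_mk'
  exact h2.comp h1

lemma fRP_snd_eq_zero_iff (p : RP1) : (fRP p).2 = 0 ↔ p = pInf := by
  induction p using Projectivization.ind with
  | h v hv =>
    rw [fRP_mk]
    unfold Fsub
    simp only
    constructor
    · intro h
      have hv1 : v 1 = 0 := by
        have hd := normsq_ne_zero hv
        have := (div_eq_zero_iff.mp h).resolve_right hd
        exact pow_eq_zero_iff (n := 2) (by norm_num) |>.mp this
      have hv0 : v 0 ≠ 0 := by
        rcases vec_ne_zero hv with h0 | h1
        · exact h0
        · exact absurd hv1 h1
      unfold pInf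
      rw [Projectivization.mk_eq_mk_iff']
      exact ⟨v 0, by funext i; fin_cases i <;> simp [hv1]⟩
    · intro h
      unfold pInf at h
      rw [Projectivization.mk_eq_mk_iff'] at h
      obtain ⟨a, ha⟩ := h
      have : v 1 = a * 0 := by rw [← ha]; simp
      simp at this
      rw [this]
      simp

def psiR (p : RP1) : ℝ := (fRP p).1 / (fRP p).2

lemma psiR_mk (v : Fin 2 → ℝ) (hv : v ≠ 0) (h1 : v 1 ≠ 0) :
    psiR (Projectivization.mk ℝ v hv) = v 0 / v 1 := by
  unfold psiR
  rw [fRP_mk]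
  unfold Fsub
  simp only
  have hd := normsq_ne_zero hv
  rw [div_eq_div_iff (by positivity) h1]
  field_simp

lemma psiR_phiR (t : ℝ) : psiR (phiR t) = t := by
  unfold phiR
  rw [psiR_mk _ _ (by simp)]
  simp

lemma phiR_psiR {p : RP1} (hp : p ≠ pInf) : phiR (psiR p) = p := by
  induction p using Projectivization.ind with
  | h v hv =>
    have h1 : v 1 ≠ 0 := by
      intro h
      exact hp ((fRP_snd_eq_zero_iff _).mp (by rw [fRP_mk]; unfold Fsub; simp [h]))
    rw [psiR_mk v hv h1]
    unfold phiR
    rw [Projectivization.mk_eq_mk_iff']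
    exact ⟨(v 1)⁻¹, by funext i; fin_cases i <;> simp [inv_mul_eq_div, h1] <;> field_simp⟩

lemma phiR_ne_pInf (t : ℝ) : phiR t ≠ pInf := by
  intro h
  have := (fRP_snd_eq_zero_iff (phiR t)).mpr h
  unfold phiR at this
  rw [fRP_mk] at this
  unfold Fsub at this
  simp at this
  nlinarith [this]

lemma phiR_injective : Function.Injective phiR := by
  intro t s h
  have := congrArg psiR h
  rwa [psiR_phiR, psiR_phiR] at this

end AuxProof

noncomputable section AuxProof2
open Polynomial Finset

lemma psiR_cwa {X : Type*} [TopologicalSpace X] {g : X → RP1} {S : Set X} {x : X}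
    (hg : ContinuousWithinAt g S x) (h : g x ≠ pInf) :
    ContinuousWithinAt (fun y => psiR (g y)) S x := by
  unfold psiR
  refine ContinuousWithinAt.div ?_ ?_ ?_
  · exact ((continuous_fst.comp continuous_fRP).continuousAt).comp_continuousWithinAt hg
  · exact ((continuous_snd.comp continuous_fRP).continuousAt).comp_continuousWithinAt hg
  · exact fun h' => h ((fRP_snd_eq_zero_iff _).mp h')

lemma mk_eq_pInf_iff (v : Fin 2 → ℝ) (hv : v ≠ 0) :
    Projectivization.mk ℝ v hv = pInf ↔ v 1 = 0 := by
  rw [← fRP_snd_eq_zero_iff, fRP_mk]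
  unfold Fsub
  simp only
  rw [_root_.div_eq_zero_iff]
  constructor
  · intro h
    rcases h with h | h
    · exact pow_eq_zero_iff (n := 2) (by norm_num) |>.mp h
    · exact absurd h (normsq_ne_zero hv)
  · intro h
    left
    rw [h]
    ring

lemma hQfact {m dn : ℕ} (P : Polynomial (MvPolynomial (Fin m) ℝ)) (hdeg : P.natDegree = dn)
    {S : Set (Fin m → ℝ)} {k : ℕ} (hk : k ≤ dn)
    (hc : ∀ x ∈ S, MvPolynomial.eval x (P.coeff (dn - k)) ≠ 0 ∧
      ∀ j < k, MvPolynomial.eval x (P.coeff (dn - j)) = 0)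
    {x : Fin m → ℝ} (hx : x ∈ S) :
    (evalP P x).natDegree = dn - k ∧ evalP P x ≠ 0 := by
  obtain ⟨h1, h2⟩ := hc x hx
  have hco : ∀ i, (evalP P x).coeff i = MvPolynomial.eval x (P.coeff i) :=
    fun i => Polynomial.coeff_map _ _
  have hlead : (evalP P x).coeff (dn - k) ≠ 0 := by rw [hco]; exact h1
  have hne : evalP P x ≠ 0 := fun h => hlead (by rw [h]; simp)
  have hle : (evalP P x).natDegree ≤ dn :=
    le_trans (Polynomial.natDegree_map_le) (le_of_eq hdeg)
  have htop : ∀ i, dn - k < i → (evalP P x).coeff i = 0 := by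
    intro i hi
    by_cases hidn : i ≤ dn
    · have he : i = dn - (dn - i) := by omega
      rw [he, hco]
      exact h2 (dn - i) (by omega)
    · exact Polynomial.coeff_eq_zero_of_natDegree_lt (by omega)
  exact ⟨le_antisymm (Polynomial.natDegree_le_iff_coeff_eq_zero.mpr htop)
    (Polynomial.le_natDegree_of_ne_zero hlead), hne⟩

end AuxProof2

/-- Let `S ⊆ ℝ^m` and `P = ∑_{k=0}^{d_n} c_k(x) x_n^k` of degree `d_n`
in `x_n`. If there is `k ∈ {0,…,d_n}` such that on all of `S` the coefficient
`c_{d_n−k}` never vanishes while `c_{d_n−j}` vanishes for all `0 ≤ j ≤ k−1`, then `P` is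
projectively delineable on `S` iff `P` is delineable on `S`. -/
theorem projDelineable_iff_delineable (m dn : ℕ)
    (P : Polynomial (MvPolynomial (Fin m) ℝ)) (hdeg : P.natDegree = dn)
    (S : Set (Fin m → ℝ)) (k : ℕ) (hk : k ≤ dn)
    (hc : ∀ x ∈ S, MvPolynomial.eval x (P.coeff (dn - k)) ≠ 0 ∧
      ∀ j < k, MvPolynomial.eval x (P.coeff (dn - j)) = 0) :
    ProjDelineable dn P S ↔ Delineable P S := by
  classical
  rcases S.eq_empty_or_nonempty with rfl | ⟨x₀, hx₀⟩
  · constructor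
    · intro _
      exact ⟨0, fun l => l.elim0, fun l => l.elim0, fun x hx => absurd hx (Set.notMem_empty x),
        fun x hx => absurd hx (Set.notMem_empty x), fun l => l.elim0⟩
    · intro _
      exact ⟨0, fun l => l.elim0, fun l => l.elim0, fun x hx => absurd hx (Set.notMem_empty x),
        fun x hx => absurd hx (Set.notMem_empty x), fun l => l.elim0⟩
  have hQd : ∀ x ∈ S, (evalP P x).natDegree = dn - k := fun x hx => (hQfact P hdeg hk hc hx).1
  have hQne : ∀ x ∈ S, evalP P x ≠ 0 := fun x hx => (hQfact P hdeg hk hc hx).2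
  have hQle : ∀ x ∈ S, (evalP P x).natDegree ≤ dn := fun x hx => by rw [hQd x hx]; omega
  constructor
  · -- ProjDelineable → Delineable
    rintro ⟨r, θ, hθcont, hθdisj, hθcover, hθmult⟩
    choose mfun hmpos hm using hθmult
    rcases Nat.eq_zero_or_pos k with hk0 | hkpos
    · -- k = 0 : no root at infinity
      subst hk0
      have hne_inf : ∀ x ∈ S, ∀ l, θ l x ≠ pInf := by
        intro x hx l hl
        have h0 : MvPolynomial.eval ![1, 0] (homog dn (evalP P x)) = 0 :=
          (hθcover x hx ![1, 0] vinf_ne_zero).mpr ⟨l, hl⟩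
        rw [homog_eval_inf] at h0
        simp at h0
        have hdQ : (evalP P x).natDegree = dn := by rw [hQd x hx]; omega
        rw [← hdQ, Polynomial.coeff_natDegree] at h0
        exact (Polynomial.leadingCoeff_ne_zero.mpr (hQne x hx)) h0
      have hphi : ∀ x ∈ S, ∀ l, θ l x = phiR (psiR (θ l x)) :=
        fun x hx l => (phiR_psiR (hne_inf x hx l)).symm
      refine ⟨r, fun l x => psiR (θ l x), ?_, ?_, ?_, ?_⟩
      · exact fun l x hx => psiR_cwa (hθcont l x hx) (hne_inf x hx l)
      · intro x hx l l' hll' heq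
        have heq' : psiR (θ l x) = psiR (θ l' x) := heq
        refine hθdisj x hx l l' hll' ?_
        rw [hphi x hx l, hphi x hx l', heq']
      · intro x hx t
        rw [← homog_eval_one dn (evalP P x) (hQle x hx) t,
          hθcover x hx ![t, 1] (vone_ne_zero t)]
        constructor
        · rintro ⟨l, hl⟩
          refine ⟨l, ?_⟩
          show psiR (θ l x) = t
          rw [show Projectivization.mk ℝ ![t,1] (vone_ne_zero t) = phiR t from rfl] at hl
          rw [hl, psiR_phiR]
        · rintro ⟨l, hl⟩
          refine ⟨l, ?_⟩
          have hl' : psiR (θ l x) = t := hl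
          rw [show Projectivization.mk ℝ ![t,1] (vone_ne_zero t) = phiR t from rfl, ← hl']
          exact hphi x hx l
      · intro l
        refine ⟨mfun l, hmpos l, ?_⟩
        intro x hx
        show (evalP P x).rootMultiplicity (psiR (θ l x)) = mfun l
        set t := psiR (θ l x) with ht
        have hmk : θ l x = Projectivization.mk ℝ ![t, 1] (vone_ne_zero t) := hphi x hx l
        have h1 : HasProjRootOfMult (homog dn (evalP P x)) ![t, 1] (mfun l) :=
          hm l x hx ![t, 1] (vone_ne_zero t) hmk
        have h2 : HasProjRootOfMult (homog dn (evalP P x)) ![t, 1]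
            ((evalP P x).rootMultiplicity t) := by
          have := hprm_finite (evalP P x) (hQne x hx) (hQle x hx) t 1 one_ne_zero
          rwa [show (![1 * t, 1] : Fin 2 → ℝ) = ![t, 1] from by norm_num] at this
        exact hprm_unique (vone_ne_zero t) h2 h1
    · -- k > 0 : root at infinity of multiplicity k
      have hQtop : ∀ x ∈ S, (evalP P x).coeff dn = 0 := by
        intro x hx
        refine Polynomial.coeff_eq_zero_of_natDegree_lt ?_
        rw [hQd x hx]; omega
      have hInfRoot : ∀ x ∈ S, ∃ l, θ l x = pInf := by
        intro x hx
        have h0 : MvPolynomial.eval ![1,0] (homog dn (evalP P x)) = 0 := by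
          rw [homog_eval_inf, hQtop x hx]; ring
        obtain ⟨l, hl⟩ := (hθcover x hx ![1,0] vinf_ne_zero).mp h0
        exact ⟨l, hl⟩
      have hInfUnique : ∀ x ∈ S, ∀ l l', θ l x = pInf → θ l' x = pInf → l = l' := by
        intro x hx l l' h h'
        by_contra hne
        exact hθdisj x hx l l' hne (h.trans h'.symm)
      have hrpos : 0 < r := (hInfRoot x₀ hx₀).elim (fun l _ => l.pos)
      obtain ⟨r', rfl⟩ : ∃ r', r = r' + 1 := ⟨r - 1, by omega⟩
      set ι : (Fin m → ℝ) → Fin (r' + 1) := fun x =>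
        if hx : ∃ l, θ l x = pInf then hx.choose else ⟨0, Nat.succ_pos r'⟩ with hι
      have hιspec : ∀ x ∈ S, θ (ι x) x = pInf := by
        intro x hx
        rw [hι]
        simp only
        rw [dif_pos (hInfRoot x hx)]
        exact (hInfRoot x hx).choose_spec
      have hιuniq : ∀ x ∈ S, ∀ l, θ l x = pInf → l = ι x :=
        fun x hx l h => hInfUnique x hx l (ι x) h (hιspec x hx)
      set c : Fin (r' + 1) := ι x₀ with hc'
      have hminf : ∀ x ∈ S, ∀ l, θ l x = pInf → mfun l = k := by
        intro x hx l h
        have h1 : HasProjRootOfMult (homog dn (evalP P x)) ![1,0] (mfun l) :=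
          hm l x hx ![1,0] vinf_ne_zero h
        have h2 := hprm_inf (evalP P x) (hQne x hx) (hQle x hx) 1 one_ne_zero
        have h3 := hprm_unique vinf_ne_zero h1 h2
        rw [h3, hQd x hx]
        omega
      have hmc : mfun c = k := hminf x₀ hx₀ c (hιspec x₀ hx₀)
      have hne_inf : ∀ x ∈ S, ∀ l, l ≠ ι x → θ l x ≠ pInf :=
        fun x hx l hl h => hl (hιuniq x hx l h)
      have hswap_ne : ∀ x : Fin m → ℝ, ∀ j : Fin r',
          (Equiv.swap (ι x) c) (c.succAbove j) ≠ ι x := by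
        intro x j h
        have h2 := congrArg (Equiv.swap (ι x) c) h
        rw [Equiv.swap_apply_self, Equiv.swap_apply_left] at h2
        exact Fin.succAbove_ne c j h2
      have hmfun_eq : ∀ x ∈ S, ∀ j : Fin r',
          mfun ((Equiv.swap (ι x) c) (c.succAbove j)) = mfun (c.succAbove j) := by
        intro x hx j
        by_cases he : c.succAbove j = ι x
        · rw [he, Equiv.swap_apply_left, hmc, hminf x hx (ι x) (hιspec x hx)]
        · rw [Equiv.swap_apply_of_ne_of_ne he (Fin.succAbove_ne c j)]
      set η : Fin r' → (Fin m → ℝ) → ℝ := fun j x =>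
        psiR (θ ((Equiv.swap (ι x) c) (c.succAbove j)) x) with hη
      have hloc : ∀ x ∈ S, ∀ᶠ y in nhdsWithin x S, ι y = ι x := by
        intro x hx
        have hev : ∀ᶠ y in nhdsWithin x S, ∀ l, l ≠ ι x → θ l y ≠ pInf := by
          rw [Filter.eventually_all]
          intro l
          by_cases hl : l = ι x
          · exact Filter.Eventually.of_forall (fun y hcon => absurd hl hcon)
          · have hlx : θ l x ≠ pInf := hne_inf x hx l hl
            have hcw : ContinuousWithinAt (fun y => (fRP (θ l y)).2) S x :=
              ((continuous_snd.comp continuous_fRP).continuousAt).comp_continuousWithinAt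
                (hθcont l x hx)
            have hne0 : (fRP (θ l x)).2 ≠ 0 := fun h0 => hlx ((fRP_snd_eq_zero_iff _).mp h0)
            have hev2 := hcw.eventually_ne hne0
            refine hev2.mono (fun y hy _ hpi => hy ?_)
            rw [hpi]
            exact (fRP_snd_eq_zero_iff pInf).mpr rfl
        have hmem : ∀ᶠ y in nhdsWithin x S, y ∈ S := self_mem_nhdsWithin
        filter_upwards [hev, hmem] with y h1 h2
        by_contra hne
        exact h1 (ι y) (fun hcon => hne hcon) (hιspec y h2)
      refine ⟨r', η, ?_, ?_, ?_, ?_⟩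
      · intro j x hx
        have hl0 : θ ((Equiv.swap (ι x) c) (c.succAbove j)) x ≠ pInf :=
          hne_inf x hx _ (hswap_ne x j)
        have hbase : ContinuousWithinAt
            (fun y => psiR (θ ((Equiv.swap (ι x) c) (c.succAbove j)) y)) S x :=
          psiR_cwa (hθcont _ x hx) hl0
        refine hbase.congr_of_eventuallyEq ?_ rfl
        filter_upwards [hloc x hx] with y hy
        show psiR (θ ((Equiv.swap (ι y) c) (c.succAbove j)) y)
          = psiR (θ ((Equiv.swap (ι x) c) (c.succAbove j)) y)
        rw [hy]
      · intro x hx j j' hjj' heq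
        have heq' : psiR (θ ((Equiv.swap (ι x) c) (c.succAbove j)) x)
            = psiR (θ ((Equiv.swap (ι x) c) (c.succAbove j')) x) := heq
        have hl1 : θ ((Equiv.swap (ι x) c) (c.succAbove j)) x ≠ pInf :=
          hne_inf x hx _ (hswap_ne x j)
        have hl2 : θ ((Equiv.swap (ι x) c) (c.succAbove j')) x ≠ pInf :=
          hne_inf x hx _ (hswap_ne x j')
        have hθeq : θ ((Equiv.swap (ι x) c) (c.succAbove j)) x
            = θ ((Equiv.swap (ι x) c) (c.succAbove j')) x := by
          rw [← phiR_psiR hl1, ← phiR_psiR hl2, heq']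
        have hl12 : (Equiv.swap (ι x) c) (c.succAbove j)
            ≠ (Equiv.swap (ι x) c) (c.succAbove j') := by
          intro hcon
          exact hjj' (Fin.succAbove_right_injective ((Equiv.swap (ι x) c).injective hcon))
        exact hθdisj x hx _ _ hl12 hθeq
      · intro x hx t
        constructor
        · intro hQt
          have h0 : MvPolynomial.eval ![t,1] (homog dn (evalP P x)) = 0 := by
            rw [homog_eval_one dn _ (hQle x hx)]
            exact hQt
          obtain ⟨l, hl⟩ := (hθcover x hx ![t,1] (vone_ne_zero t)).mp h0
          have hlne : l ≠ ι x := by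
            intro h
            refine phiR_ne_pInf t ?_
            rw [show phiR t = Projectivization.mk ℝ ![t,1] (vone_ne_zero t) from rfl, ← hl, h]
            exact hιspec x hx
          have hswl : (Equiv.swap (ι x) c) l ≠ c := by
            intro h
            have h2 := congrArg (Equiv.swap (ι x) c) h
            rw [Equiv.swap_apply_self, Equiv.swap_apply_right] at h2
            exact hlne h2
          obtain ⟨j, hj⟩ := Fin.exists_succAbove_eq hswl
          refine ⟨j, ?_⟩
          show psiR (θ ((Equiv.swap (ι x) c) (c.succAbove j)) x) = t
          rw [hj, Equiv.swap_apply_self, hl]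
          exact psiR_phiR t
        · rintro ⟨j, hj⟩
          have hj' : psiR (θ ((Equiv.swap (ι x) c) (c.succAbove j)) x) = t := hj
          have hl0 : θ ((Equiv.swap (ι x) c) (c.succAbove j)) x ≠ pInf :=
            hne_inf x hx _ (hswap_ne x j)
          have hθl0 : θ ((Equiv.swap (ι x) c) (c.succAbove j)) x = phiR t := by
            rw [← hj']
            exact (phiR_psiR hl0).symm
          have h0 := (hθcover x hx ![t,1] (vone_ne_zero t)).mpr ⟨_, hθl0⟩
          rw [homog_eval_one dn _ (hQle x hx)] at h0
          exact h0
      · intro j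
        refine ⟨mfun (c.succAbove j), hmpos _, ?_⟩
        intro x hx
        show (evalP P x).rootMultiplicity
          (psiR (θ ((Equiv.swap (ι x) c) (c.succAbove j)) x)) = mfun (c.succAbove j)
        set t := psiR (θ ((Equiv.swap (ι x) c) (c.succAbove j)) x) with ht
        have hl0 : θ ((Equiv.swap (ι x) c) (c.succAbove j)) x ≠ pInf :=
          hne_inf x hx _ (hswap_ne x j)
        have hθl0 : θ ((Equiv.swap (ι x) c) (c.succAbove j)) x
            = Projectivization.mk ℝ ![t,1] (vone_ne_zero t) := (phiR_psiR hl0).symm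
        have h1 : HasProjRootOfMult (homog dn (evalP P x)) ![t,1] (mfun _) :=
          hm _ x hx ![t,1] (vone_ne_zero t) hθl0
        have h2 : HasProjRootOfMult (homog dn (evalP P x)) ![t,1]
            ((evalP P x).rootMultiplicity t) := by
          have h3 := hprm_finite (evalP P x) (hQne x hx) (hQle x hx) t 1 one_ne_zero
          rwa [show (![1 * t, 1] : Fin 2 → ℝ) = ![t, 1] from by norm_num] at h3
        rw [hprm_unique (vone_ne_zero t) h2 h1]
        exact hmfun_eq x hx j
  · -- Delineable → ProjDelineable
    rintro ⟨r, η, hcont, hdisj, hcover, hmult⟩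
    rcases Nat.eq_zero_or_pos k with hk0 | hkpos
    · -- k = 0
      subst hk0
      refine ⟨r, fun l x => phiR (η l x), ?_, ?_, ?_, ?_⟩
      · exact fun l => continuous_phiR.comp_continuousOn (hcont l)
      · exact fun x hx l l' hll' heq => hdisj x hx l l' hll' (phiR_injective heq)
      · intro x hx v hv
        by_cases hb : v 1 = 0
        · have hv0 : v 0 ≠ 0 := (vec_ne_zero hv).resolve_right (fun h => h hb)
          constructor
          · intro h0
            exfalso
            have hveq : v = ![v 0, (0:ℝ)] := by rw [← hb]; exact vec_cases v
            rw [hveq, homog_eval_inf] at h0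
            have hdQ : (evalP P x).natDegree = dn := by rw [hQd x hx]; omega
            have : (evalP P x).coeff dn ≠ 0 := by
              rw [← hdQ]; exact Polynomial.leadingCoeff_ne_zero.mpr (hQne x hx)
            exact this (by
              rcases mul_eq_zero.mp h0 with h | h
              · exact h
              · exact absurd h (pow_ne_zero _ hv0))
          · rintro ⟨l, hl⟩
            exfalso
            have hl' : phiR (η l x) = Projectivization.mk ℝ v hv := hl
            refine phiR_ne_pInf (η l x) ?_
            rw [hl']
            exact (mk_eq_pInf_iff v hv).mpr hb
        · set t := v 0 / v 1 with htdef
          have hveq : v = ![v 1 * t, v 1 * 1] := by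
            funext i
            fin_cases i
            · show v 0 = v 1 * t
              rw [htdef]; field_simp
            · show v 1 = v 1 * 1
              ring
          have hmkv : Projectivization.mk ℝ v hv
              = Projectivization.mk ℝ ![t, 1] (vone_ne_zero t) := by
            rw [Projectivization.mk_eq_mk_iff']
            exact ⟨v 1, by
              rw [hveq]
              funext i
              fin_cases i <;> simp⟩
          have heval : MvPolynomial.eval v (homog dn (evalP P x))
              = v 1 ^ dn * (evalP P x).eval t := by
            rw [show MvPolynomial.eval v = MvPolynomial.eval ![v 1 * t, v 1 * 1] from by
              rw [← hveq], homog_eval_smul, homog_eval_one dn _ (hQle x hx)]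
          rw [heval]
          constructor
          · intro h0
            have hQt : (evalP P x).eval t = 0 := by
              rcases mul_eq_zero.mp h0 with h | h
              · exact absurd h (pow_ne_zero _ hb)
              · exact h
            obtain ⟨l, hl⟩ := (hcover x hx t).mp hQt
            refine ⟨l, ?_⟩
            show phiR (η l x) = _
            rw [hl, hmkv]
            rfl
          · rintro ⟨l, hl⟩
            have hl' : phiR (η l x) = Projectivization.mk ℝ v hv := hl
            rw [hmkv] at hl'
            have : η l x = t := phiR_injective hl'
            have hQt : (evalP P x).eval t = 0 := (hcover x hx t).mpr ⟨l, this⟩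
            rw [hQt]; ring
      · intro l
        obtain ⟨mu, hmupos, hmu⟩ := hmult l
        refine ⟨mu, hmupos, ?_⟩
        intro x hx v hv hmk
        have h2 : Projectivization.mk ℝ v hv
            = Projectivization.mk ℝ ![η l x, 1] (vone_ne_zero (η l x)) :=
          Eq.symm (α := RP1) hmk
        rw [Projectivization.mk_eq_mk_iff] at h2
        obtain ⟨a, ha⟩ := h2
        have hveq : (![(a : ℝ) * η l x, (a : ℝ)] : Fin 2 → ℝ) = v := by
          rw [← ha]
          funext i
          fin_cases i <;> simp [Units.smul_def]
        rw [← hveq, ← hmu x hx]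
        exact hprm_finite (evalP P x) (hQne x hx) (hQle x hx) (η l x) (a : ℝ) a.ne_zero
    · -- k > 0
      have hcofftop : ∀ x ∈ S, (evalP P x).coeff dn = 0 := by
        intro x hx
        refine Polynomial.coeff_eq_zero_of_natDegree_lt ?_
        rw [hQd x hx]; omega
      set θ : Fin (r+1) → (Fin m → ℝ) → RP1 := fun l =>
        if h : (l : ℕ) < r then (fun x => phiR (η ⟨l, h⟩ x)) else (fun _ => pInf) with hθ
      have hθpos : ∀ (l : Fin (r+1)) (h : (l : ℕ) < r), θ l = fun x => phiR (η ⟨l, h⟩ x) := by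
        intro l h; rw [hθ]; simp only [dif_pos h]
      have hθneg : ∀ (l : Fin (r+1)), ¬ ((l : ℕ) < r) → θ l = fun _ => pInf := by
        intro l h; rw [hθ]; simp only [dif_neg h]
      refine ⟨r + 1, θ, ?_, ?_, ?_, ?_⟩
      · intro l
        by_cases h : (l : ℕ) < r
        · rw [hθpos l h]
          exact continuous_phiR.comp_continuousOn (hcont ⟨l, h⟩)
        · rw [hθneg l h]
          exact continuousOn_const
      · intro x hx l l' hll' heq
        by_cases h : (l : ℕ) < r <;> by_cases h' : (l' : ℕ) < r
        · rw [hθpos l h, hθpos l' h'] at heq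
          refine hdisj x hx ⟨l, h⟩ ⟨l', h'⟩ (fun hcon => hll' ?_) (phiR_injective heq)
          exact Fin.ext (by simpa using congrArg Fin.val hcon)
        · rw [hθpos l h, hθneg l' h'] at heq
          exact phiR_ne_pInf _ heq
        · rw [hθneg l h, hθpos l' h'] at heq
          exact phiR_ne_pInf _ heq.symm
        · refine hll' (Fin.ext ?_)
          have := l.isLt; have := l'.isLt
          omega
      · intro x hx v hv
        by_cases hb : v 1 = 0
        · refine iff_of_true ?_ ?_
          · have hveq : v = ![v 0, (0:ℝ)] := by rw [← hb]; exact vec_cases v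
            rw [hveq, homog_eval_inf, hcofftop x hx]
            ring
          · refine ⟨⟨r, Nat.lt_succ_self r⟩, ?_⟩
            rw [hθneg ⟨r, Nat.lt_succ_self r⟩ (by simp)]
            exact ((mk_eq_pInf_iff v hv).mpr hb).symm
        · set t := v 0 / v 1 with htdef
          have hveq : v = ![v 1 * t, v 1 * 1] := by
            funext i
            fin_cases i
            · show v 0 = v 1 * t
              rw [htdef]; field_simp
            · show v 1 = v 1 * 1
              ring
          have hmkv : Projectivization.mk ℝ v hv
              = Projectivization.mk ℝ ![t, 1] (vone_ne_zero t) := by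
            rw [Projectivization.mk_eq_mk_iff']
            exact ⟨v 1, by
              rw [hveq]
              funext i
              fin_cases i <;> simp⟩
          have heval : MvPolynomial.eval v (homog dn (evalP P x))
              = v 1 ^ dn * (evalP P x).eval t := by
            rw [show MvPolynomial.eval v = MvPolynomial.eval ![v 1 * t, v 1 * 1] from by
              rw [← hveq], homog_eval_smul, homog_eval_one dn _ (hQle x hx)]
          rw [heval]
          constructor
          · intro h0
            have hQt : (evalP P x).eval t = 0 := by
              rcases mul_eq_zero.mp h0 with h | h
              · exact absurd h (pow_ne_zero _ hb)
              · exact h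
            obtain ⟨l, hl⟩ := (hcover x hx t).mp hQt
            refine ⟨⟨(l : ℕ), lt_trans l.isLt (Nat.lt_succ_self r)⟩, ?_⟩
            rw [hθpos _ l.isLt]
            show phiR (η ⟨(l : ℕ), l.isLt⟩ x) = _
            rw [show (⟨(l : ℕ), l.isLt⟩ : Fin r) = l from Fin.ext rfl, hl, hmkv]
            rfl
          · rintro ⟨l, hl⟩
            by_cases h : (l : ℕ) < r
            · rw [hθpos l h] at hl
              have hl' : phiR (η ⟨l, h⟩ x) = Projectivization.mk ℝ v hv := hl
              rw [hmkv] at hl'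
              have : η ⟨l, h⟩ x = t := phiR_injective hl'
              have hQt : (evalP P x).eval t = 0 := (hcover x hx t).mpr ⟨⟨l, h⟩, this⟩
              rw [hQt]; ring
            · rw [hθneg l h] at hl
              exfalso
              have : v 1 = 0 := (mk_eq_pInf_iff v hv).mp (Eq.symm (α := RP1) hl)
              exact hb this
      · intro l
        by_cases h : (l : ℕ) < r
        · obtain ⟨mu, hmupos, hmu⟩ := hmult ⟨l, h⟩
          refine ⟨mu, hmupos, ?_⟩
          intro x hx v hv hmk
          rw [hθpos l h] at hmk
          have h2 : Projectivization.mk ℝ v hv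
              = Projectivization.mk ℝ ![η ⟨l, h⟩ x, 1] (vone_ne_zero (η ⟨l, h⟩ x)) :=
            Eq.symm (α := RP1) hmk
          rw [Projectivization.mk_eq_mk_iff] at h2
          obtain ⟨a, ha⟩ := h2
          have hveq : (![(a : ℝ) * η ⟨l, h⟩ x, (a : ℝ)] : Fin 2 → ℝ) = v := by
            rw [← ha]
            funext i
            fin_cases i <;> simp [Units.smul_def]
          rw [← hveq, ← hmu x hx]
          exact hprm_finite (evalP P x) (hQne x hx) (hQle x hx) (η ⟨l, h⟩ x) (a : ℝ) a.ne_zero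
        · refine ⟨k, hkpos, ?_⟩
          intro x hx v hv hmk
          rw [hθneg l h] at hmk
          have hb : v 1 = 0 := (mk_eq_pInf_iff v hv).mp (Eq.symm (α := RP1) hmk)
          have hv0 : v 0 ≠ 0 := (vec_ne_zero hv).resolve_right (fun hcon => hcon hb)
          have hveq : v = ![v 0, (0:ℝ)] := by rw [← hb]; exact vec_cases v
          rw [hveq]
          have := hprm_inf (evalP P x) (hQne x hx) (hQle x hx) (v 0) hv0
          rwa [hQd x hx, show dn - (dn - k) = k from by omega] at this
end

section
/- Let S ⊆ ℝ^{n−1} and let P ∈ ℝ[x₁,…,x_{n−1};x_n] have degree d_n in x_n, with leading coefficient c_{d_n}(x) (the coefficient of x_n^{d_n}). If c_{d_n} never vanishes on S, then P is projectively delineable on S if and only if P is delineable on S. -/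
noncomputable section
open Polynomial Finset

lemma eval_homog (d : ℕ) (Q : Polynomial ℝ) (v : Fin 2 → ℝ) :
    MvPolynomial.eval v (homog d Q) =
      ∑ k ∈ Finset.range (d + 1), Q.coeff k * v 0 ^ k * v 1 ^ (d - k) := by
  simp [homog]

lemma eval_homog_of_ne (d : ℕ) (Q : Polynomial ℝ) (v : Fin 2 → ℝ)
    (hb : v 1 ≠ 0) (hQ : Q.natDegree ≤ d) :
    MvPolynomial.eval v (homog d Q) = v 1 ^ d * Q.eval (v 0 / v 1) := by
  rw [eval_homog, Polynomial.eval_eq_sum_range' (lt_of_le_of_lt hQ (Nat.lt_succ_self d)),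
    Finset.mul_sum]
  refine Finset.sum_congr rfl fun k hk => ?_
  rw [Finset.mem_range, Nat.lt_succ_iff] at hk
  have h1 : v 1 ^ d = v 1 ^ k * v 1 ^ (d - k) := by
    rw [← pow_add, Nat.add_sub_cancel' hk]
  rw [h1, div_pow]
  field_simp

lemma eval_homog_of_eq (d : ℕ) (Q : Polynomial ℝ) (v : Fin 2 → ℝ) (hb : v 1 = 0) :
    MvPolynomial.eval v (homog d Q) = Q.coeff d * v 0 ^ d := by
  rw [eval_homog]
  rw [Finset.sum_eq_single d (fun k hk hkd => ?_) (fun h => absurd (Finset.self_mem_range_succ d) h)]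
  · simp [hb]
  · rw [Finset.mem_range, Nat.lt_succ_iff] at hk
    rw [hb, zero_pow (Nat.sub_ne_zero_of_lt (lt_of_le_of_ne hk hkd)), mul_zero]

lemma homog_factor (d mult : ℕ) (Q W : Polynomial ℝ) (v : Fin 2 → ℝ)
    (hv1 : v 1 ≠ 0) (hQW : Q = (X - C (v 0 / v 1)) ^ mult * W) (hW : W ≠ 0)
    (hd : Q.natDegree = d) :
    homog d Q = (MvPolynomial.C (v 1) * MvPolynomial.X 0
        - MvPolynomial.C (v 0) * MvPolynomial.X 1) ^ mult *
      (MvPolynomial.C ((v 1)⁻¹ ^ mult) * homog (d - mult) W) := by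
  set r := v 0 / v 1 with hr
  have hv0 : v 0 = r * v 1 := by rw [hr, div_mul_cancel₀ _ hv1]
  have hdeg : d = mult + W.natDegree := by
    rw [← hd, hQW, Polynomial.natDegree_mul (pow_ne_zero _ (Polynomial.X_sub_C_ne_zero r)) hW,
      Polynomial.natDegree_pow, Polynomial.natDegree_X_sub_C, mul_one]
  have hWd : W.natDegree = d - mult := by omega
  have hlc : Q.coeff d = W.coeff (d - mult) := by
    rw [← hWd, ← hd, ← Polynomial.leadingCoeff, ← Polynomial.leadingCoeff, hQW,
      Polynomial.leadingCoeff_mul, Polynomial.leadingCoeff_pow,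
      Polynomial.leadingCoeff_X_sub_C, one_pow, one_mul]
  apply MvPolynomial.funext
  intro x
  simp only [map_mul, map_pow, map_sub, MvPolynomial.eval_C, MvPolynomial.eval_X]
  by_cases hx1 : x 1 = 0
  · rw [eval_homog_of_eq _ _ _ hx1, eval_homog_of_eq _ _ _ hx1, hlc, hx1]
    rw [mul_zero, sub_zero, mul_pow]
    have hxd : x 0 ^ d = x 0 ^ mult * x 0 ^ (d - mult) := by
      rw [← pow_add]; congr 1; omega
    rw [hxd]
    field_simp
    rw [one_div, inv_pow, mul_inv_cancel_right₀ (pow_ne_zero mult hv1)]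
  · rw [eval_homog_of_ne _ _ _ hx1 hd.le,
      eval_homog_of_ne _ _ _ hx1 (le_of_eq hWd), hQW]
    simp only [Polynomial.eval_mul, Polynomial.eval_pow, Polynomial.eval_sub,
      Polynomial.eval_X, Polynomial.eval_C]
    have hxd : x 1 ^ d = x 1 ^ mult * x 1 ^ (d - mult) := by
      rw [← pow_add]; congr 1; omega
    rw [hxd, hv0]
    have : v 1 * x 0 - r * v 1 * x 1 = v 1 * (x 0 - r * x 1) := by ring
    rw [this, mul_pow]
    have h2 : x 0 / x 1 - r = (x 0 - r * x 1) / x 1 := by field_simp [mul_comm]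
    rw [h2, div_pow]
    field_simp
    rw [one_div, inv_pow, mul_inv_cancel_right₀ (pow_ne_zero mult hv1)]

lemma hasProjRoot_of_rootMult (d : ℕ) (Q : Polynomial ℝ) (hQ0 : Q ≠ 0)
    (hd : Q.natDegree = d) (v : Fin 2 → ℝ) (hv1 : v 1 ≠ 0) :
    HasProjRootOfMult (homog d Q) v (Q.rootMultiplicity (v 0 / v 1)) := by
  set r := v 0 / v 1 with hr
  set mult := Q.rootMultiplicity r with hm
  set W : Polynomial ℝ := Q /ₘ (X - C r) ^ mult with hWdef
  have hQW : Q = (X - C r) ^ mult * W :=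
    (Polynomial.pow_mul_divByMonic_rootMultiplicity_eq Q r).symm
  have hWr : W.eval r ≠ 0 := Polynomial.eval_divByMonic_pow_rootMultiplicity_ne_zero r hQ0
  have hW : W ≠ 0 := fun h => hQ0 (by rw [hQW, h, mul_zero])
  have hWd : W.natDegree = d - mult := by
    have : Q.natDegree = mult + W.natDegree := by
      rw [hQW, Polynomial.natDegree_mul (pow_ne_zero _ (Polynomial.X_sub_C_ne_zero r)) hW,
        Polynomial.natDegree_pow, Polynomial.natDegree_X_sub_C, mul_one]
    omega
  refine ⟨MvPolynomial.C ((v 1)⁻¹ ^ mult) * homog (d - mult) W,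
    homog_factor d mult Q W v hv1 hQW hW hd, ?_⟩
  rw [map_mul, MvPolynomial.eval_C, eval_homog_of_ne _ _ _ hv1 (le_of_eq hWd), ← hr]
  exact mul_ne_zero (pow_ne_zero _ (inv_ne_zero hv1))
    (mul_ne_zero (pow_ne_zero _ hv1) hWr)

/-- dehomogenization ring hom -/
def dehom : MvPolynomial (Fin 2) ℝ →+* Polynomial ℝ :=
  (MvPolynomial.eval₂Hom Polynomial.C ![Polynomial.X, 1])

lemma dehom_homog (d : ℕ) (Q : Polynomial ℝ) (hQ : Q.natDegree ≤ d) :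
    dehom (homog d Q) = Q := by
  rw [homog, map_sum]
  conv_rhs => rw [Q.as_sum_range' (d + 1) (lt_of_le_of_lt hQ (Nat.lt_succ_self d))]
  refine Finset.sum_congr rfl fun k hk => ?_
  simp [dehom, Polynomial.C_mul_X_pow_eq_monomial]

lemma rootMult_of_hasProjRoot (d mult : ℕ) (Q : Polynomial ℝ) (hQ0 : Q ≠ 0)
    (hd : Q.natDegree = d) (v : Fin 2 → ℝ) (hv1 : v 1 ≠ 0)
    (hp : HasProjRootOfMult (homog d Q) v mult) :
    Q.rootMultiplicity (v 0 / v 1) = mult := by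
  obtain ⟨h, hgh, hev⟩ := hp
  set r := v 0 / v 1 with hr
  set L : MvPolynomial (Fin 2) ℝ :=
    MvPolynomial.C (v 1) * MvPolynomial.X 0 - MvPolynomial.C (v 0) * MvPolynomial.X 1 with hL
  have hv0 : v 0 = r * v 1 := by rw [hr, div_mul_cancel₀ _ hv1]
  -- step 1 : mult ≤ rootMultiplicity
  have hdvd : (X - C r) ^ mult ∣ Q := by
    refine ⟨Polynomial.C ((v 1) ^ mult) * dehom h, ?_⟩
    have := congrArg dehom hgh
    rw [dehom_homog d Q hd.le] at this
    rw [this, map_mul, map_pow]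
    have hdL : dehom L = Polynomial.C (v 1) * (X - C r) := by
      simp [dehom, hL, hv0]
      ring
    rw [hdL, mul_pow, ← Polynomial.C_pow]
    ring
  have h1 : mult ≤ Q.rootMultiplicity r := (Polynomial.le_rootMultiplicity_iff hQ0).2 hdvd
  -- step 2 : equality
  rcases eq_or_lt_of_le h1 with heq | hlt
  · exact heq.symm
  exfalso
  obtain ⟨h', hgh', hev'⟩ := hasProjRoot_of_rootMult d Q hQ0 hd v hv1
  have hLne : L ≠ 0 := by
    intro h0
    have := congrArg (MvPolynomial.eval ![(1:ℝ), 0]) h0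
    simp [hL] at this
    exact hv1 this
  have hcancel : h = L ^ (Q.rootMultiplicity r - mult) * h' := by
    have key : L ^ mult * h = L ^ mult * (L ^ (Q.rootMultiplicity r - mult) * h') := by
      rw [← mul_assoc, ← pow_add]
      have : mult + (Q.rootMultiplicity r - mult) = Q.rootMultiplicity r := by omega
      rw [this, ← hgh', ← hgh]
    exact mul_left_cancel₀ (pow_ne_zero _ hLne) key
  have hevL : MvPolynomial.eval v L = 0 := by simp [hL]; ring
  rw [hcancel, map_mul, map_pow, hevL, zero_pow (by omega), zero_mul] at hev
  exact hev rfl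

lemma vne (t : ℝ) : ![t, (1:ℝ)] ≠ 0 := by
  intro h
  have := congrFun h 1
  simp at this

/-- the affine embedding ℝ → ℝP¹ -/
def mkAffine (t : ℝ) : RP1 := Projectivization.mk ℝ ![t, 1] (vne t)

lemma continuous_mkAffine : Continuous mkAffine := by
  have h1 : Continuous fun t : ℝ => (![t, (1:ℝ)] : Fin 2 → ℝ) := by
    refine continuous_pi fun i => ?_
    fin_cases i
    · simpa using continuous_id'
    · simpa using continuous_const
  have h2 : Continuous fun t : ℝ => (⟨![t, 1], vne t⟩ : {v : Fin 2 → ℝ // v ≠ 0}) :=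
    h1.subtype_mk _
  exact continuous_quotient_mk'.comp h2

/-- affine chart -/
def chart : RP1 → ℝ :=
  Projectivization.lift (fun v => v.1 0 / v.1 1) (by
    rintro ⟨a, ha⟩ ⟨b, hb⟩ t h
    have ht : t ≠ 0 := by
      rintro rfl
      simp at h
      exact ha h
    have h0 := congrFun h 0
    have h1 := congrFun h 1
    simp [Pi.smul_apply] at h0 h1
    simp only [h0, h1]
    rw [mul_div_mul_left _ _ ht])

lemma chart_mk (v : Fin 2 → ℝ) (hv : v ≠ 0) :
    chart (Projectivization.mk ℝ v hv) = v 0 / v 1 := rfl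

/-- the invariant predicate `v 1 ≠ 0` on ℝP¹ -/
def finite1 : RP1 → Prop :=
  Projectivization.lift (fun v => v.1 1 ≠ 0) (by
    rintro ⟨a, ha⟩ ⟨b, hb⟩ t h
    have ht : t ≠ 0 := by
      rintro rfl
      simp at h
      exact ha h
    have h1 := congrFun h 1
    simp [Pi.smul_apply] at h1
    simp [h1, ht])

lemma finite1_mk (v : Fin 2 → ℝ) (hv : v ≠ 0) :
    finite1 (Projectivization.mk ℝ v hv) ↔ v 1 ≠ 0 := Iff.rfl

lemma mk_eq_mkAffine (v : Fin 2 → ℝ) (hv : v ≠ 0) (h1 : v 1 ≠ 0) :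
    Projectivization.mk ℝ v hv = mkAffine (v 0 / v 1) := by
  rw [mkAffine, Projectivization.mk_eq_mk_iff']
  refine ⟨v 1, ?_⟩
  funext i
  fin_cases i
  · simp [Pi.smul_apply]
    field_simp
  · simp [Pi.smul_apply]

lemma mkAffine_inj {a b : ℝ} (h : mkAffine a = mkAffine b) : a = b := by
  rw [mkAffine, mkAffine, Projectivization.mk_eq_mk_iff'] at h
  obtain ⟨t, ht⟩ := h
  have h1 := congrFun ht 1
  have h0 := congrFun ht 0
  simp [Pi.smul_apply] at h1 h0
  rw [h1] at h0
  simp at h0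
  exact h0.symm

lemma finite1_of_mkAffine_eq {a : ℝ} {v : Fin 2 → ℝ} {hv : v ≠ 0}
    (h : mkAffine a = Projectivization.mk ℝ v hv) : v 1 ≠ 0 := by
  rw [mkAffine, Projectivization.mk_eq_mk_iff'] at h
  obtain ⟨t, ht⟩ := h
  have h1 := congrFun ht 1
  simp [Pi.smul_apply] at h1
  intro h0
  rw [h0] at h1
  simp at h1

lemma chart_eq_of_mkAffine_eq {a : ℝ} {v : Fin 2 → ℝ} {hv : v ≠ 0}
    (h : mkAffine a = Projectivization.mk ℝ v hv) : v 0 / v 1 = a := by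
  have h1 := finite1_of_mkAffine_eq h
  rw [mk_eq_mkAffine v hv h1] at h
  exact (mkAffine_inj h).symm

lemma continuousOn_chart : ContinuousOn chart {p : RP1 | finite1 p} := by
  letI : Setoid {v : Fin 2 → ℝ // v ≠ 0} := projectivizationSetoid ℝ (Fin 2 → ℝ)
  rw [continuousOn_iff']
  intro t ht
  refine ⟨{p : RP1 | finite1 p ∧ chart p ∈ t}, ?_, ?_⟩
  · refine (isQuotientMap_quotient_mk' : Topology.IsQuotientMap (Quotient.mk' : {v : Fin 2 → ℝ // v ≠ 0} → RP1)).isOpen_preimage.1 ?_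
    have hset : (Quotient.mk' : {v : Fin 2 → ℝ // v ≠ 0} → RP1) ⁻¹'
          {p : RP1 | finite1 p ∧ chart p ∈ t}
        = {v : {v : Fin 2 → ℝ // v ≠ 0} | v.1 1 ≠ 0} ∩
          ((fun v : {v : Fin 2 → ℝ // v ≠ 0} => v.1 0 / v.1 1) ⁻¹' t) := rfl
    change IsOpen ({v : {v : Fin 2 → ℝ // v ≠ 0} | v.1 1 ≠ 0} ∩
      ((fun v : {v : Fin 2 → ℝ // v ≠ 0} => v.1 0 / v.1 1) ⁻¹' t))
    have hopen : IsOpen {v : {v : Fin 2 → ℝ // v ≠ 0} | v.1 1 ≠ 0} := by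
      have hc : Continuous (fun w : Fin 2 → ℝ => w 1) := continuous_apply 1
      have : IsOpen {w : Fin 2 → ℝ | w 1 ≠ 0} :=
        hc.isOpen_preimage {(0:ℝ)}ᶜ isOpen_compl_singleton
      exact this.preimage continuous_subtype_val
    refine ContinuousOn.isOpen_inter_preimage ?_ hopen ht
    exact ContinuousOn.div
      ((continuous_apply 0).comp continuous_subtype_val).continuousOn
      ((continuous_apply 1).comp continuous_subtype_val).continuousOn
      (fun x hx => hx)
  · ext p
    simp only [Set.mem_inter_iff, Set.mem_preimage, Set.mem_setOf_eq]
    tauto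

end

/-- Let `S ⊆ ℝ^m` and `P` of degree `d_n` in `x_n` with leading coefficient
`c_{d_n}`. If `c_{d_n}` never vanishes on `S`, then `P` is projectively delineable on `S`
iff `P` is delineable on `S`. -/
theorem projDelineable_iff_delineable_of_lc_ne_zero (m dn : ℕ)
    (P : Polynomial (MvPolynomial (Fin m) ℝ)) (hdeg : P.natDegree = dn)
    (S : Set (Fin m → ℝ))
    (hc : ∀ x ∈ S, MvPolynomial.eval x (P.coeff dn) ≠ 0) :
    ProjDelineable dn P S ↔ Delineable P S := by
  have hQcoeff : ∀ x : Fin m → ℝ, (evalP P x).coeff dn = MvPolynomial.eval x (P.coeff dn) :=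
    fun x => Polynomial.coeff_map _ _
  have hQne : ∀ x ∈ S, evalP P x ≠ 0 := by
    intro x hx h0
    apply hc x hx
    rw [← hQcoeff x, h0, Polynomial.coeff_zero]
  have hQdegle : ∀ x : Fin m → ℝ, (evalP P x).natDegree ≤ dn := by
    intro x
    exact le_trans Polynomial.natDegree_map_le hdeg.le
  have hQdeg : ∀ x ∈ S, (evalP P x).natDegree = dn := by
    intro x hx
    refine le_antisymm (hQdegle x) (Polynomial.le_natDegree_of_ne_zero ?_)
    rw [hQcoeff x]; exact hc x hx
  constructor
  · rintro ⟨k, θ, hcont, hdisj, hzero, hmult⟩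
    have hrep1 : ∀ x ∈ S, ∀ l, (θ l x).rep 1 ≠ 0 := by
      intro x hx l h1
      have h0 : (θ l x).rep 0 ≠ 0 := by
        intro h0
        apply (θ l x).rep_nonzero
        funext i; fin_cases i <;> assumption
      have hz := (hzero x hx ((θ l x).rep) (θ l x).rep_nonzero).2
        ⟨l, ((θ l x).mk_rep).symm⟩
      rw [eval_homog_of_eq _ _ _ h1] at hz
      exact (mul_ne_zero (hQcoeff x ▸ hc x hx) (pow_ne_zero _ h0)) hz
    have hfin : ∀ x ∈ S, ∀ l, finite1 (θ l x) := by
      intro x hx l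
      rw [← (θ l x).mk_rep, finite1_mk]
      exact hrep1 x hx l
    have haff : ∀ x ∈ S, ∀ l, θ l x = mkAffine (chart (θ l x)) := by
      intro x hx l
      conv_lhs => rw [← (θ l x).mk_rep]
      rw [mk_eq_mkAffine _ _ (hrep1 x hx l)]
      congr 1
      conv_rhs => rw [← (θ l x).mk_rep]
      rfl
    refine ⟨k, fun l x => chart (θ l x), ?_, ?_, ?_, ?_⟩
    · intro l
      exact continuousOn_chart.comp (hcont l) (fun x hx => hfin x hx l)
    · intro x hx l l' hll' h
      refine hdisj x hx l l' hll' ?_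
      rw [haff x hx l, haff x hx l']
      exact congrArg mkAffine h
    · intro x hx t
      have he : (evalP P x).eval t = MvPolynomial.eval ![t, 1] (homog dn (evalP P x)) := by
        rw [eval_homog_of_ne _ _ _ (by simp) (hQdegle x)]
        simp
      constructor
      · intro h0
        obtain ⟨l, hl⟩ := (hzero x hx ![t, 1] (vne t)).1 (by rw [← he, h0])
        refine ⟨l, ?_⟩
        show chart (θ l x) = t
        rw [hl, chart_mk]
        simp
      · rintro ⟨l, hl⟩
        have hl' : chart (θ l x) = t := hl
        rw [he]
        refine (hzero x hx ![t, 1] (vne t)).2 ⟨l, ?_⟩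
        rw [haff x hx l, hl']
        rfl
    · intro l
      obtain ⟨mult, hpos, hm⟩ := hmult l
      refine ⟨mult, hpos, fun x hx => ?_⟩
      have h1 := hm x hx ![chart (θ l x), 1] (vne _) (haff x hx l)
      have h2 := rootMult_of_hasProjRoot dn mult (evalP P x) (hQne x hx) (hQdeg x hx)
        ![chart (θ l x), 1] (by simp) h1
      simpa using h2
  · rintro ⟨k, θ, hcont, hdisj, hzero, hmult⟩
    refine ⟨k, fun l x => mkAffine (θ l x), ?_, ?_, ?_, ?_⟩
    · intro l
      exact continuous_mkAffine.comp_continuousOn (hcont l)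
    · intro x hx l l' hll' h
      exact hdisj x hx l l' hll' (mkAffine_inj h)
    · intro x hx v hv
      by_cases h1 : v 1 = 0
      · constructor
        · intro h0
          exfalso
          rw [eval_homog_of_eq _ _ _ h1] at h0
          have hv0 : v 0 ≠ 0 := by
            intro h00
            apply hv
            funext i; fin_cases i <;> assumption
          exact (mul_ne_zero (hQcoeff x ▸ hc x hx) (pow_ne_zero _ hv0)) h0
        · rintro ⟨l, hl⟩
          exact absurd h1 (finite1_of_mkAffine_eq hl)
      · rw [eval_homog_of_ne _ _ _ h1 (hQdegle x)]
        constructor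
        · intro h0
          have h0' : (evalP P x).eval (v 0 / v 1) = 0 := by
            rcases mul_eq_zero.1 h0 with h | h
            · exact absurd h (pow_ne_zero _ h1)
            · exact h
          obtain ⟨l, hl⟩ := (hzero x hx (v 0 / v 1)).1 h0'
          refine ⟨l, ?_⟩
          show mkAffine (θ l x) = _
          rw [hl]
          exact (mk_eq_mkAffine v hv h1).symm
        · rintro ⟨l, hl⟩
          have hC := chart_eq_of_mkAffine_eq hl
          have h0' := (hzero x hx (θ l x)).2 ⟨l, rfl⟩
          rw [hC, h0', mul_zero]
    · intro l
      obtain ⟨mult, hpos, hm⟩ := hmult l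
      refine ⟨mult, hpos, ?_⟩
      intro x hx v hv heq
      have h1 := finite1_of_mkAffine_eq heq
      have hC := chart_eq_of_mkAffine_eq heq
      have h2 := hasProjRoot_of_rootMult dn (evalP P x) (hQne x hx) (hQdeg x hx) v h1
      rw [hC, hm x hx] at h2
      exact h2
end
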